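/- arXiv:1107.2900 — 14 statements merged into one kernel-verified Lean document; each statement's English description precedes it below -/
import Mathlib

section
/- Assume each φ_i is continuous. Let τ̂ ∈ ℝ^N satisfy τ̂_d ≤ 0 and τ̂_i ≤ φ_i((λ_a + τ̂_{j_a})_{a∈A}) for every i ≠ d, and let τ⁰ ∈ ℝ^N satisfy τ⁰_d = 0, τ⁰ ≥ τ̂, and τ⁰_i ≥ φ_i((λ_a + τ⁰_{j_a})_{a∈A}) for every i ≠ d. Then the iterates τ^{n+1}_i = φ_i((λ_a + τ^n_{j_a})_{a∈A}) for i ≠ d, τ^{n+1}_d = 0, are non-increasing, satisfy τ̂ ≤ τ^n ≤ τ⁰ for all n, and converge as n → ∞ to a vector τ with τ_d = 0, τ_i = φ_i((λ_a + τ_{j_a})_{a∈A}) for all i ≠ d, and τ̂_i ≤ τ_i ≤ τ⁰_i for all i. -/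
/-- with continuous `φ_i`, given a subsolution `τ̂` (with `τ̂_d ≤ 0`)
and a supersolution `τ⁰` (with `τ⁰_d = 0`, `τ⁰ ≥ τ̂`), the iterates
`τ^{n+1}_i = φ_i((λ_a + τ^n_{j_a})_a)`, `τ^{n+1}_d = 0`, started at `τ⁰`,
are non-increasing, stay in `[τ̂, τ⁰]`, and converge to a fixed point `τ` of the
dynamic programming equations with `τ̂ ≤ τ ≤ τ⁰`. -/
theorem stmt2 {N A : Type} [Fintype N] [Fintype A]
    (tail head : A → N) (d : N) (lam : A → ℝ)
    (phi : N → (A → ℝ) → ℝ)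
    (hout : ∀ i, i ≠ d → ∃ a, tail a = i)
    (hcont : ∀ i, i ≠ d → Continuous (phi i))
    (hdep : ∀ i, i ≠ d → ∀ z z' : A → ℝ, (∀ a, tail a = i → z a = z' a) →
      phi i z = phi i z')
    (hmono : ∀ i, i ≠ d → ∀ z z' : A → ℝ, (∀ a, z a ≤ z' a) → phi i z ≤ phi i z')
    (hmin : ∀ i, i ≠ d → ∀ z : A → ℝ, ∀ a, tail a = i → phi i z ≤ z a)
    (τhat : N → ℝ)
    (hhatd : τhat d ≤ 0)
    (hsub : ∀ i, i ≠ d → τhat i ≤ phi i (fun a => lam a + τhat (head a)))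
    (τ0 : N → ℝ)
    (hτ0d : τ0 d = 0)
    (hle : ∀ i, τhat i ≤ τ0 i)
    (hsup : ∀ i, i ≠ d → phi i (fun a => lam a + τ0 (head a)) ≤ τ0 i)
    (T : ℕ → N → ℝ)
    (hT0 : T 0 = τ0)
    (hTd : ∀ n, T (n + 1) d = 0)
    (hTs : ∀ n i, i ≠ d → T (n + 1) i = phi i (fun a => lam a + T n (head a))) :
    (∀ n i, T (n + 1) i ≤ T n i) ∧
    (∀ n i, τhat i ≤ T n i ∧ T n i ≤ τ0 i) ∧
    ∃ τ : N → ℝ,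
      (∀ i, Filter.Tendsto (fun n => T n i) Filter.atTop (nhds (τ i))) ∧
      τ d = 0 ∧
      (∀ i, i ≠ d → τ i = phi i (fun a => lam a + τ (head a))) ∧
      (∀ i, τhat i ≤ τ i ∧ τ i ≤ τ0 i) := by

  have hlow : ∀ n i, τhat i ≤ T n i := by
    intro n
    induction n with
    | zero => intro i; rw [hT0]; exact hle i
    | succ n ih =>
      intro i
      by_cases hi : i = d
      · subst hi; rw [hTd]; exact hhatd
      · rw [hTs n i hi]
        calc τhat i ≤ phi i (fun a => lam a + τhat (head a)) := hsub i hi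
          _ ≤ _ := hmono i hi _ _ (fun a => by linarith [ih (head a)])
  have hdec : ∀ n i, T (n + 1) i ≤ T n i := by
    intro n
    induction n with
    | zero =>
      intro i
      by_cases hi : i = d
      · subst hi; rw [hTd, hT0, hτ0d]
      · rw [hTs 0 i hi, hT0]; exact hsup i hi
    | succ n ih =>
      intro i
      by_cases hi : i = d
      · subst hi; rw [hTd, hTd]
      · rw [hTs (n + 1) i hi, hTs n i hi]
        exact hmono i hi _ _ (fun a => by linarith [ih (head a)])
  have hanti : ∀ i, Antitone fun n => T n i :=
    fun i => antitone_nat_of_succ_le fun n => hdec n i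
  have hup : ∀ n i, T n i ≤ τ0 i := by
    intro n i
    calc T n i ≤ T 0 i := hanti i (Nat.zero_le n)
      _ = τ0 i := by rw [hT0]
  set τ : N → ℝ := fun i => ⨅ n, T n i with hτ
  have htend : ∀ i, Filter.Tendsto (fun n => T n i) Filter.atTop (nhds (τ i)) := by
    intro i
    exact tendsto_atTop_ciInf (hanti i) ⟨τhat i, by rintro x ⟨n, rfl⟩; exact hlow n i⟩
  refine ⟨hdec, fun n i => ⟨hlow n i, hup n i⟩, τ, htend, ?_, ?_, fun i =>
    ⟨ge_of_tendsto (htend i) (Filter.Eventually.of_forall fun n => hlow n i),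
     le_of_tendsto (htend i) (Filter.Eventually.of_forall fun n => hup n i)⟩⟩
  · have h0 : Filter.Tendsto (fun n => T n d) Filter.atTop (nhds 0) := by
      apply Filter.Tendsto.congr' _ tendsto_const_nhds
      filter_upwards [Filter.eventually_ge_atTop 1] with n hn
      obtain ⟨m, rfl⟩ := Nat.exists_eq_add_of_le hn
      rw [Nat.add_comm]
      exact (hTd m).symm
    exact tendsto_nhds_unique (htend d) h0
  · intro i hi
    have h1 : Filter.Tendsto (fun n => T (n + 1) i) Filter.atTop (nhds (τ i)) :=
      (htend i).comp (Filter.tendsto_add_atTop_nat 1)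
    have h2 : Filter.Tendsto (fun n => phi i (fun a => lam a + T n (head a)))
        Filter.atTop (nhds (phi i (fun a => lam a + τ (head a)))) := by
      apply ((hcont i hi).tendsto _).comp
      exact tendsto_pi_nhds.2 fun a => tendsto_const_nhds.add (htend (head a))
    have h3 : Filter.Tendsto (fun n => T (n + 1) i) Filter.atTop
        (nhds (phi i (fun a => lam a + τ (head a)))) :=
      h2.congr fun n => (hTs n i hi).symm
    exact tendsto_nhds_unique h1 h3
end

section
/- Let τ̂ ∈ ℝ^N satisfy τ̂_i < φ_i((λ_a + τ̂_{j_a})_{a∈A}) for every node i ≠ d, and let (τ, z) solve the dynamic programming system at λ. Then for each node i ≠ d there exists a node j with P_{ij}(z) > 0 and τ̂_j − τ_j > τ̂_i − τ_i. -/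
lemma concave_grad_ineq {E : Type} [NormedAddCommGroup E] [NormedSpace ℝ E]
    {f : E → ℝ} {L : E →L[ℝ] ℝ} {x y : E}
    (hc : ConcaveOn ℝ Set.univ f) (hd : HasFDerivAt f L x) :
    f y ≤ f x + L (y - x) := by
  set g : ℝ → ℝ := fun t => f (AffineMap.lineMap x y t) with hg
  have hgc : ConcaveOn ℝ Set.univ g := by
    have := hc.comp_affineMap (AffineMap.lineMap x y)
    rw [Set.preimage_univ] at this
    exact this
  have hline : HasDerivAt (fun t : ℝ => AffineMap.lineMap x y t) (y - x) 0 := by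
    have h1 : HasDerivAt (fun t : ℝ => t • (y - x) + x) ((1:ℝ) • (y - x)) 0 :=
      ((hasDerivAt_id 0).smul_const (y - x)).add_const x
    have heq : (fun t : ℝ => AffineMap.lineMap x y t) = fun t : ℝ => t • (y - x) + x := by
      funext t
      simp [AffineMap.lineMap_apply_module, smul_sub, sub_smul]
      abel
    rw [heq]
    simpa using h1
  have hgd : HasDerivAt g (L (y - x)) 0 := by
    have h0 : (AffineMap.lineMap x y : ℝ → E) 0 = x := by simp
    have hd' : HasFDerivAt f L ((AffineMap.lineMap x y : ℝ → E) 0) := by rw [h0]; exact hd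
    exact hd'.comp_hasDerivAt 0 hline
  have hsl := hgc.slope_le_of_hasDerivAt (Set.mem_univ 0) (Set.mem_univ 1) one_pos hgd
  have h01 : slope g 0 1 = g 1 - g 0 := by simp [slope]
  have hg0 : g 0 = f x := by simp [hg]
  have hg1 : g 1 = f y := by simp [hg]
  rw [h01, hg0, hg1] at hsl
  linarith

/-- if `τ̂_i < φ_i((λ_a + τ̂_{j_a})_a)` for all `i ≠ d` and `(τ, z)`
solves the dynamic programming system at `λ`, then for each `i ≠ d` there is a
node `j` with transition probability `P_{ij}(z) > 0` and `τ̂_j − τ_j > τ̂_i − τ_i`. -/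
theorem stmt4 {N A : Type} [Fintype N] [Fintype A] [DecidableEq N] [DecidableEq A]
    (tail head : A → N) (d : N) (lam : A → ℝ)
    (phi : N → (A → ℝ) → ℝ) (Dphi : N → (A → ℝ) → A → ℝ)
    (hout : ∀ i, i ≠ d → ∃ a, tail a = i)
    (hdep : ∀ i, i ≠ d → ∀ z z' : A → ℝ, (∀ a, tail a = i → z a = z' a) →
      phi i z = phi i z')
    (hconc : ∀ i, i ≠ d → ConcaveOn ℝ Set.univ (phi i))
    (hderiv : ∀ i, i ≠ d → ∀ z : A → ℝ,
      HasFDerivAt (phi i)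
        (∑ a, Dphi i z a • (ContinuousLinearMap.proj a : (A → ℝ) →L[ℝ] ℝ)) z)
    (hmono : ∀ i, i ≠ d → Monotone (phi i))
    (hDnn : ∀ i, i ≠ d → ∀ z a, 0 ≤ Dphi i z a)
    (hDzero : ∀ i, i ≠ d → ∀ (z : A → ℝ) a, tail a ≠ i → Dphi i z a = 0)
    (hDsum : ∀ i, i ≠ d → ∀ z : A → ℝ,
      ∑ a ∈ Finset.univ.filter (fun a => tail a = i), Dphi i z a = 1)
    (τhat : N → ℝ)
    (hsub : ∀ i, i ≠ d → τhat i < phi i (fun a => lam a + τhat (head a)))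
    (τ : N → ℝ) (z : A → ℝ)
    (hτd : τ d = 0) (hz : ∀ a, z a = lam a + τ (head a))
    (hτ : ∀ i, i ≠ d → τ i = phi i z) :
    ∀ i, i ≠ d → ∃ j,
      0 < ∑ a ∈ Finset.univ.filter (fun a => tail a = i ∧ head a = j), Dphi i z a ∧
      τhat i - τ i < τhat j - τ j := by
  intro i hi
  set zhat : A → ℝ := fun a => lam a + τhat (head a) with hzhat
  -- gradient inequality
  have hgrad := concave_grad_ineq (hconc i hi) (hderiv i hi z) (y := zhat)
  have hLval : (∑ a, Dphi i z a • (ContinuousLinearMap.proj a : (A → ℝ) →L[ℝ] ℝ)) (zhat - z)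
      = ∑ a, Dphi i z a * (τhat (head a) - τ (head a)) := by
    rw [ContinuousLinearMap.sum_apply]
    refine Finset.sum_congr rfl fun a _ => ?_
    have : zhat a - z a = τhat (head a) - τ (head a) := by
      rw [hz a]; simp [hzhat]
    simp [ContinuousLinearMap.smul_apply, ContinuousLinearMap.proj_apply, Pi.sub_apply, this,
      smul_eq_mul]
  have hkey : τhat i - τ i < ∑ a ∈ Finset.univ.filter (fun a => tail a = i),
      Dphi i z a * (τhat (head a) - τ (head a)) := by
    have hτi := hτ i hi
    have hsubi := hsub i hi
    have hsum_eq : ∑ a, Dphi i z a * (τhat (head a) - τ (head a))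
        = ∑ a ∈ Finset.univ.filter (fun a => tail a = i),
            Dphi i z a * (τhat (head a) - τ (head a)) := by
      symm
      apply Finset.sum_filter_of_ne
      intro a _ hne
      by_contra hta
      exact hne (by rw [hDzero i hi z a hta]; ring)
    rw [hLval, hsum_eq] at hgrad
    have : τhat i < phi i zhat := hsubi
    linarith [hgrad, hτi ▸ hgrad]
  -- find the arc
  by_contra hcon
  push_neg at hcon
  have hbound : ∀ a ∈ Finset.univ.filter (fun a => tail a = i),
      Dphi i z a * (τhat (head a) - τ (head a)) ≤ Dphi i z a * (τhat i - τ i) := by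
    intro a ha
    rcases eq_or_lt_of_le (hDnn i hi z a) with h0 | hpos
    · rw [← h0]; simp
    · have hta : tail a = i := (Finset.mem_filter.mp ha).2
      -- show sum over (tail=i ∧ head = head a) is positive
      have hsumpos : 0 < ∑ b ∈ Finset.univ.filter (fun b => tail b = i ∧ head b = head a),
          Dphi i z b := by
        have hmem : a ∈ Finset.univ.filter (fun b => tail b = i ∧ head b = head a) := by
          simp [hta]
        calc 0 < Dphi i z a := hpos
          _ ≤ _ := Finset.single_le_sum (fun b _ => hDnn i hi z b) hmem
      have := hcon (head a) hsumpos
      nlinarith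
  have := Finset.sum_le_sum hbound
  rw [← Finset.sum_mul, hDsum i hi z, one_mul] at this
  linarith
end

section
/- Suppose there exists τ̂ ∈ ℝ^N with τ̂_i < φ_i((λ_a + τ̂_{j_a})_{a∈A}) for every node i ≠ d, and let (τ, z) solve the dynamic programming system at λ. Then the matrix I − P̂(z) is invertible, where P̂(z) is the submatrix of P(z) with rows and columns indexed by the nodes other than d. -/
/-- Tangent-line inequality for concave differentiable functions. -/
lemma concave_tangent_le {E : Type*} [NormedAddCommGroup E] [NormedSpace ℝ E]
    {φ : E → ℝ} {L : E →L[ℝ] ℝ} {z y : E}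
    (hc : ConcaveOn ℝ Set.univ φ) (hd : HasFDerivAt φ L z) :
    φ y ≤ φ z + L (y - z) := by
  set g : ℝ → ℝ := fun t => φ (AffineMap.lineMap z y t) with hg_def
  have hg : ConcaveOn ℝ Set.univ g := by
    have := hc.comp_affineMap (AffineMap.lineMap z y : ℝ →ᵃ[ℝ] E)
    simp only [Set.preimage_univ] at this
    exact this
  have hline : HasDerivAt (fun t : ℝ => (AffineMap.lineMap z y : ℝ →ᵃ[ℝ] E) t) (y - z) 0 := by
    have h1 : HasDerivAt (fun t : ℝ => t • (y - z) + z) ((1 : ℝ) • (y - z)) 0 :=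
      ((hasDerivAt_id 0).smul_const (y - z)).add_const z
    have heq : (fun t : ℝ => (AffineMap.lineMap z y : ℝ →ᵃ[ℝ] E) t)
        = fun t : ℝ => t • (y - z) + z := by
      funext t; rw [AffineMap.lineMap_apply_module']
    rw [heq]; simpa using h1
  have hgd : HasDerivAt g (L (y - z)) 0 := by
    have hd0 : HasFDerivAt φ L ((AffineMap.lineMap z y : ℝ →ᵃ[ℝ] E) 0) := by
      rw [AffineMap.lineMap_apply_zero]; exact hd
    have := hd0.comp_hasDerivAt (x := (0 : ℝ)) hline
    exact this
  have hs := hg.slope_le_of_hasDerivAt (Set.mem_univ (0 : ℝ)) (Set.mem_univ (1 : ℝ))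
    one_pos hgd
  have hslope : slope g 0 1 = φ y - φ z := by
    simp [slope_def_field, hg_def, AffineMap.lineMap_apply_one, AffineMap.lineMap_apply_zero]
  rw [hslope] at hs
  linarith

/-- if there exists `τ̂` with `τ̂_i < φ_i((λ_a + τ̂_{j_a})_a)` for all
`i ≠ d` and `(τ, z)` solves the dynamic programming system at `λ`, then the
matrix `I − P̂(z)` (rows/columns indexed by nodes `≠ d`) is invertible. -/
theorem stmt5 {N A : Type} [Fintype N] [Fintype A] [DecidableEq N] [DecidableEq A]
    (tail head : A → N) (d : N) (lam : A → ℝ)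
    (phi : N → (A → ℝ) → ℝ) (Dphi : N → (A → ℝ) → A → ℝ)
    (hout : ∀ i, i ≠ d → ∃ a, tail a = i)
    (hdep : ∀ i, i ≠ d → ∀ z z' : A → ℝ, (∀ a, tail a = i → z a = z' a) →
      phi i z = phi i z')
    (hconc : ∀ i, i ≠ d → ConcaveOn ℝ Set.univ (phi i))
    (hderiv : ∀ i, i ≠ d → ∀ z : A → ℝ,
      HasFDerivAt (phi i)
        (∑ a, Dphi i z a • (ContinuousLinearMap.proj a : (A → ℝ) →L[ℝ] ℝ)) z)
    (hmono : ∀ i, i ≠ d → Monotone (phi i))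
    (hDnn : ∀ i, i ≠ d → ∀ z a, 0 ≤ Dphi i z a)
    (hDzero : ∀ i, i ≠ d → ∀ (z : A → ℝ) a, tail a ≠ i → Dphi i z a = 0)
    (hDsum : ∀ i, i ≠ d → ∀ z : A → ℝ,
      ∑ a ∈ Finset.univ.filter (fun a => tail a = i), Dphi i z a = 1)
    (τhat : N → ℝ)
    (hsub : ∀ i, i ≠ d → τhat i < phi i (fun a => lam a + τhat (head a)))
    (τ : N → ℝ) (z : A → ℝ)
    (hτd : τ d = 0) (hz : ∀ a, z a = lam a + τ (head a))
    (hτ : ∀ i, i ≠ d → τ i = phi i z) :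
    IsUnit ((1 : Matrix {i : N // i ≠ d} {i : N // i ≠ d} ℝ) -
      Matrix.of (fun i j : {i : N // i ≠ d} =>
        ∑ a ∈ Finset.univ.filter (fun a => tail a = i.1 ∧ head a = j.1),
          Dphi i.1 z a)) := by
  classical
  set M : Matrix {i : N // i ≠ d} {i : N // i ≠ d} ℝ :=
    Matrix.of (fun i j : {i : N // i ≠ d} =>
      ∑ a ∈ Finset.univ.filter (fun a => tail a = i.1 ∧ head a = j.1),
        Dphi i.1 z a) with hM_def
  -- the comparison vector
  set w : N → ℝ := fun j => τ j - τhat j + τhat d with hw_def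
  have hwd : w d = 0 := by simp [hw_def, hτd]
  -- total sums of Dphi
  have hDsum' : ∀ i, i ≠ d → ∑ a, Dphi i z a = 1 := by
    intro i hi
    rw [← hDsum i hi z]
    exact (Finset.sum_subset (Finset.filter_subset _ _)
      (fun a _ ha => hDzero i hi z a (by simpa using ha))).symm
  -- key strict inequality:  ∑_a D_a w(head a) < w i   for i ≠ d
  have key : ∀ i, (hi : i ≠ d) → ∑ a, Dphi i z a * w (head a) < w i := by
    intro i hi
    set zh : A → ℝ := fun a => lam a + τhat (head a) with hzh
    have htan := concave_tangent_le (hconc i hi) (hderiv i hi z) (y := zh)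
    have hLv : (∑ a, Dphi i z a • (ContinuousLinearMap.proj a : (A → ℝ) →L[ℝ] ℝ)) (zh - z)
        = ∑ a, Dphi i z a * (τhat (head a) - τ (head a)) := by
      rw [ContinuousLinearMap.sum_apply]
      refine Finset.sum_congr rfl (fun a _ => ?_)
      simp [hzh, hz a, smul_eq_mul]
    have h1 : τhat i < τ i + ∑ a, Dphi i z a * (τhat (head a) - τ (head a)) := by
      have := hsub i hi
      rw [hτ i hi]
      calc τhat i < phi i zh := this
        _ ≤ phi i z + _ := htan
        _ = phi i z + ∑ a, Dphi i z a * (τhat (head a) - τ (head a)) := by rw [hLv]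
        _ = _ := by rw [← hτ i hi]
    have h2 : ∑ a, Dphi i z a * (τhat (head a) - τ (head a))
        = τhat d - ∑ a, Dphi i z a * w (head a) := by
      have : ∀ a, Dphi i z a * (τhat (head a) - τ (head a))
          = Dphi i z a * τhat d - Dphi i z a * w (head a) := by
        intro a; simp only [hw_def]; ring
      rw [Finset.sum_congr rfl (fun a _ => this a), Finset.sum_sub_distrib,
        ← Finset.sum_mul, hDsum' i hi, one_mul]
    rw [h2] at h1
    simp only [hw_def]
    linarith
  -- mulVec formula
  have hMW_gen : ∀ (i : {i : N // i ≠ d}) (u : N → ℝ), u d = 0 →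
      (M.mulVec (fun j => u j.1)) i = ∑ a, Dphi i.1 z a * u (head a) := by
    intro i u hud
    have hstep1 : (M.mulVec (fun j => u j.1)) i
        = ∑ j : {i : N // i ≠ d}, ∑ a ∈ Finset.univ.filter
            (fun a => tail a = i.1 ∧ head a = j.1), Dphi i.1 z a * u (head a) := by
      simp only [Matrix.mulVec, dotProduct, hM_def, Matrix.of_apply]
      refine Finset.sum_congr rfl (fun j _ => ?_)
      rw [Finset.sum_mul]
      refine Finset.sum_congr rfl (fun a ha => ?_)
      have : head a = j.1 := (Finset.mem_filter.mp ha).2.2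
      rw [this]
    set g : N → ℝ := fun j => ∑ a ∈ Finset.univ.filter
        (fun a => tail a = i.1 ∧ head a = j), Dphi i.1 z a * u (head a) with hg
    have hstep2 : ∑ j : {i : N // i ≠ d}, g j.1 = ∑ j ∈ Finset.univ.erase d, g j := by
      rw [← Finset.filter_ne']
      exact (Finset.sum_subtype _ (by simp) g).symm
    have hgd : g d = 0 := by
      refine Finset.sum_eq_zero (fun a ha => ?_)
      have : head a = d := (Finset.mem_filter.mp ha).2.2
      rw [this, hud, mul_zero]
    have hstep3 : ∑ j ∈ Finset.univ.erase d, g j = ∑ j, g j := by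
      rw [← Finset.add_sum_erase _ g (Finset.mem_univ d), hgd, zero_add]
    have hstep4 : ∑ j, g j = ∑ a ∈ Finset.univ.filter (fun a => tail a = i.1),
        Dphi i.1 z a * u (head a) := by
      rw [← Finset.sum_fiberwise_of_maps_to (fun a _ => Finset.mem_univ (head a))
        (fun a => Dphi i.1 z a * u (head a))]
      refine Finset.sum_congr rfl (fun j _ => ?_)
      simp only [hg, Finset.filter_filter]
    have hstep5 : ∑ a ∈ Finset.univ.filter (fun a => tail a = i.1),
        Dphi i.1 z a * u (head a) = ∑ a, Dphi i.1 z a * u (head a) :=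
      Finset.sum_subset (Finset.filter_subset _ _)
        (fun a _ ha => by rw [hDzero i.1 i.2 z a (by simpa using ha), zero_mul])
    rw [hstep1, hstep2, hstep3, hstep4, hstep5]
  -- entries nonneg
  have hMnn : ∀ i j : {i : N // i ≠ d}, 0 ≤ M i j := fun i j =>
    Finset.sum_nonneg (fun a _ => hDnn i.1 i.2 z a)
  -- row sums ≤ 1
  have hrow : ∀ i : {i : N // i ≠ d}, ∑ j, M i j ≤ 1 := by
    intro i
    set g : N → ℝ := fun j => ∑ a ∈ Finset.univ.filter
        (fun a => tail a = i.1 ∧ head a = j), Dphi i.1 z a with hg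
    have h1 : ∑ j : {i : N // i ≠ d}, M i j = ∑ j ∈ Finset.univ.erase d, g j := by
      rw [← Finset.filter_ne']
      exact (Finset.sum_subtype _ (by simp) g).symm
    have h2 : ∑ j ∈ Finset.univ.erase d, g j ≤ ∑ j, g j :=
      Finset.sum_le_sum_of_subset_of_nonneg (Finset.erase_subset _ _)
        (fun j _ _ => Finset.sum_nonneg (fun a _ => hDnn i.1 i.2 z a))
    have h3 : ∑ j, g j = ∑ a ∈ Finset.univ.filter (fun a => tail a = i.1), Dphi i.1 z a := by
      rw [← Finset.sum_fiberwise_of_maps_to (fun a _ => Finset.mem_univ (head a))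
        (fun a => Dphi i.1 z a)]
      refine Finset.sum_congr rfl (fun j _ => ?_)
      simp only [hg, Finset.filter_filter]
    rw [h1]
    calc ∑ j ∈ Finset.univ.erase d, g j ≤ ∑ j, g j := h2
      _ = _ := h3
      _ = 1 := hDsum i.1 i.2 z
  -- W positive
  set W : {i : N // i ≠ d} → ℝ := fun j => w j.1 with hW
  have hMWlt : ∀ i : {i : N // i ≠ d}, (M.mulVec W) i < W i := by
    intro i
    rw [hMW_gen i w hwd]
    exact key i.1 i.2
  have hWpos : ∀ i : {i : N // i ≠ d}, 0 < W i := by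
    intro i
    by_contra hle
    push_neg at hle
    obtain ⟨i0, _, hi0⟩ := Finset.exists_min_image Finset.univ W ⟨i, Finset.mem_univ i⟩
    have hWi0 : W i0 ≤ 0 := le_trans (hi0 i (Finset.mem_univ i)) hle
    have h1 : W i0 ≤ (M.mulVec W) i0 := by
      calc W i0 = 1 * W i0 := (one_mul _).symm
        _ ≤ (∑ j, M i0 j) * W i0 := mul_le_mul_of_nonpos_right (hrow i0) hWi0
        _ = ∑ j, M i0 j * W i0 := Finset.sum_mul _ _ _
        _ ≤ ∑ j, M i0 j * W j := Finset.sum_le_sum (fun j _ =>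
            mul_le_mul_of_nonneg_left (hi0 j (Finset.mem_univ j)) (hMnn i0 j))
        _ = (M.mulVec W) i0 := rfl
    exact absurd (lt_of_le_of_lt h1 (hMWlt i0)) (lt_irrefl _)
  -- kernel triviality
  have hdet : (1 - M).det ≠ 0 := by
    intro hdet0
    obtain ⟨x, hx0, hxker⟩ := (Matrix.exists_mulVec_eq_zero_iff).mpr hdet0
    rw [Matrix.sub_mulVec, Matrix.one_mulVec] at hxker
    have hfix : M.mulVec x = x := (sub_eq_zero.mp hxker).symm
    obtain ⟨i1, hi1⟩ : ∃ i, x i ≠ 0 := by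
      by_contra h; push_neg at h; exact hx0 (funext h)
    obtain ⟨i0, _, hi0⟩ := Finset.exists_max_image Finset.univ (fun i => |x i| / W i)
      ⟨i1, Finset.mem_univ i1⟩
    set α : ℝ := |x i0| / W i0 with hα
    have hαpos : 0 < α := by
      have := hi0 i1 (Finset.mem_univ i1)
      have h2 : 0 < |x i1| / W i1 := div_pos (abs_pos.mpr hi1) (hWpos i1)
      linarith
    have hbound : ∀ j, |x j| ≤ α * W j := by
      intro j
      have h := (div_le_iff₀ (hWpos j)).mp (hi0 j (Finset.mem_univ j))
      linarith
    have hxi0 : |x i0| = α * W i0 := by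
      rw [hα, div_mul_cancel₀]
      exact (hWpos i0).ne'
    have hlt : |x i0| < |x i0| := by
      calc |x i0| = |(M.mulVec x) i0| := by rw [hfix]
        _ ≤ ∑ j, |M i0 j * x j| := Finset.abs_sum_le_sum_abs _ _
        _ = ∑ j, M i0 j * |x j| := Finset.sum_congr rfl (fun j _ => by
            rw [abs_mul, abs_of_nonneg (hMnn i0 j)])
        _ ≤ ∑ j, M i0 j * (α * W j) := Finset.sum_le_sum (fun j _ =>
            mul_le_mul_of_nonneg_left (hbound j) (hMnn i0 j))
        _ = α * ∑ j, M i0 j * W j := by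
            rw [Finset.mul_sum]; exact Finset.sum_congr rfl (fun j _ => by ring)
        _ = α * (M.mulVec W) i0 := rfl
        _ < α * W i0 := by exact mul_lt_mul_of_pos_left (hMWlt i0) hαpos
        _ = |x i0| := hxi0.symm
    exact lt_irrefl _ hlt
  rw [Matrix.isUnit_iff_isUnit_det]
  exact isUnit_iff_ne_zero.mpr hdet
end

section
/- Let P be a square matrix indexed by a finite set S, with nonnegative entries, and suppose there exists an integer m ≥ 1 such that every row sum of the power P^m is strictly less than 1. Then the matrix I − P is invertible, the series Σ_{k=0}^∞ P^k converges, its sum equals (I − P)^{-1}, and every entry of (I − P)^{-1} is nonnegative. -/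
open Filter Finset

section Aux

variable {S : Type} [Fintype S] [DecidableEq S]

private lemma stmt6_pow_nn (P : Matrix S S ℝ) (hnn : ∀ i j, 0 ≤ P i j) :
    ∀ (n : ℕ) (i j : S), 0 ≤ (P ^ n) i j := by
  intro n
  induction n with
  | zero => intro i j; by_cases h : i = j <;> simp [Matrix.one_apply, h]
  | succ n ih =>
    intro i j
    rw [pow_succ, Matrix.mul_apply]
    exact Finset.sum_nonneg fun k _ => mul_nonneg (ih i k) (hnn k j)

attribute [local instance] Matrix.linftyOpNormedRing Matrix.linftyOpNormedAlgebra

private lemma stmt6_entry_norm_le (A : Matrix S S ℝ) (i j : S) : ‖A i j‖ ≤ ‖A‖ := by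
  have h1 : ‖A i j‖₊ ≤ ∑ k, ‖A i k‖₊ :=
    Finset.single_le_sum (f := fun k => ‖A i k‖₊) (fun k _ => zero_le) (Finset.mem_univ j)
  have h2 : (∑ k, ‖A i k‖₊) ≤ Finset.univ.sup fun i => ∑ k, ‖A i k‖₊ :=
    Finset.le_sup (f := fun i => ∑ k, ‖A i k‖₊) (Finset.mem_univ i)
  have := h1.trans h2
  rw [← Matrix.linfty_opNNNorm_def] at this
  exact this

private lemma stmt6_norm_pow_lt_one (P : Matrix S S ℝ) (hnn : ∀ i j, 0 ≤ P i j)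
    {m : ℕ} (hrow : ∀ i, ∑ j, (P ^ m) i j < 1) : ‖P ^ m‖ < 1 := by
  rw [Matrix.linfty_opNorm_def]
  rw [show (1 : ℝ) = ((1 : NNReal) : ℝ) by norm_num, NNReal.coe_lt_coe]
  refine (Finset.sup_lt_iff (by norm_num)).2 fun i _ => ?_
  rw [← NNReal.coe_lt_coe, NNReal.coe_sum, NNReal.coe_one]
  have : ∀ j : S, ((‖(P ^ m) i j‖₊ : ℝ)) = (P ^ m) i j := fun j => by
    rw [coe_nnnorm, Real.norm_eq_abs, abs_of_nonneg (stmt6_pow_nn P hnn m i j)]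
  rw [Finset.sum_congr rfl fun j _ => this j]
  exact hrow i

private lemma stmt6_tendsto (P : Matrix S S ℝ) (hnn : ∀ i j, 0 ≤ P i j)
    (hm : ∃ m : ℕ, 1 ≤ m ∧ ∀ i, ∑ j, (P ^ m) i j < 1) (i j : S) :
    Tendsto (fun n : ℕ => (P ^ n) i j) atTop (nhds 0) := by
  obtain ⟨m, hm1, hrow⟩ := hm
  have hm0 : m ≠ 0 := by omega
  set a : ℝ := ‖P ^ m‖ with ha_def
  have ha0 : 0 ≤ a := norm_nonneg _
  have ha1 : a < 1 := stmt6_norm_pow_lt_one P hnn hrow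
  set C : ℝ := ∑ r ∈ Finset.range m, ‖P ^ r‖ with hC_def
  have hC : ∀ r < m, ‖P ^ r‖ ≤ C := fun r hr =>
    Finset.single_le_sum (f := fun r => ‖P ^ r‖) (fun k _ => norm_nonneg _)
      (Finset.mem_range.2 hr)
  have key : ∀ n : ℕ, ‖P ^ n‖ ≤ a ^ (n / m) * C := by
    intro n
    have hdecomp : P ^ n = (P ^ m) ^ (n / m) * P ^ (n % m) := by
      rw [← pow_mul, ← pow_add]
      congr 1
      exact (Nat.div_add_mod n m).symm
    rcases Nat.eq_zero_or_pos (n / m) with hq | hq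
    · have hn : n < m := by
        rcases Nat.lt_or_ge n m with h | h
        · exact h
        · exact absurd (Nat.div_pos h (by omega)) (by omega)
      rw [hq, pow_zero, one_mul]
      exact hC n hn
    · calc ‖P ^ n‖ ≤ ‖(P ^ m) ^ (n / m)‖ * ‖P ^ (n % m)‖ := by
            rw [hdecomp]; exact norm_mul_le _ _
        _ ≤ a ^ (n / m) * C := by
            refine mul_le_mul (norm_pow_le' _ hq) (hC _ (Nat.mod_lt _ (by omega)))
              (norm_nonneg _) (pow_nonneg ha0 _)
  have hlim : Tendsto (fun n : ℕ => a ^ (n / m) * C) atTop (nhds 0) := by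
    have h1 : Tendsto (fun q : ℕ => a ^ q) atTop (nhds 0) :=
      tendsto_pow_atTop_nhds_zero_of_lt_one ha0 ha1
    have h2 : Tendsto (fun n : ℕ => n / m) atTop atTop :=
      Nat.tendsto_div_const_atTop hm0
    have := (h1.comp h2).mul_const C
    simpa using this
  have hnorm : Tendsto (fun n : ℕ => ‖P ^ n‖) atTop (nhds 0) :=
    squeeze_zero (fun n => norm_nonneg _) key hlim
  exact squeeze_zero_norm (fun n => stmt6_entry_norm_le (P ^ n) i j) hnorm

private lemma stmt6_isUnit (P : Matrix S S ℝ) (hnn : ∀ i j, 0 ≤ P i j)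
    (hm : ∃ m : ℕ, 1 ≤ m ∧ ∀ i, ∑ j, (P ^ m) i j < 1) :
    IsUnit (1 - P) := by
  obtain ⟨m, hm1, hrow⟩ := hm
  have ha : ‖P ^ m‖ < 1 := stmt6_norm_pow_lt_one P hnn hrow
  have hu : IsUnit ((1 - P) * ∑ k ∈ Finset.range m, P ^ k) := by
    rw [mul_neg_geom_sum]
    exact isUnit_one_sub_of_norm_lt_one ha
  have hdet := (Matrix.isUnit_iff_isUnit_det _).1 hu
  rw [Matrix.det_mul] at hdet
  exact (Matrix.isUnit_iff_isUnit_det _).2 (isUnit_of_mul_isUnit_left hdet)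

end Aux

/-- a nonnegative square matrix `P` such that some power `P^m`
(`m ≥ 1`) has all row sums `< 1` satisfies: `I − P` is invertible, the series
`Σ_k P^k` converges with sum `(I − P)⁻¹`, and `(I − P)⁻¹` has nonnegative
entries. -/
theorem stmt6 {S : Type} [Fintype S] [DecidableEq S] (P : Matrix S S ℝ)
    (hnn : ∀ i j, 0 ≤ P i j)
    (hm : ∃ m : ℕ, 1 ≤ m ∧ ∀ i, ∑ j, (P ^ m) i j < 1) :
    IsUnit (1 - P) ∧
    HasSum (fun k : ℕ => P ^ k) (1 - P)⁻¹ ∧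
    ∀ i j, 0 ≤ (1 - P)⁻¹ i j := by
  have h1 : IsUnit (1 - P) := stmt6_isUnit P hnn hm
  have hdet : IsUnit (1 - P).det := (Matrix.isUnit_iff_isUnit_det _).1 h1
  set T := (1 - P)⁻¹ with hT_def
  have hAn : ∀ n : ℕ, ∑ k ∈ Finset.range n, P ^ k = T * (1 - P ^ n) := by
    intro n
    calc ∑ k ∈ Finset.range n, P ^ k
        = T * ((1 - P) * ∑ k ∈ Finset.range n, P ^ k) := by
          rw [← mul_assoc, hT_def, Matrix.nonsing_inv_mul _ hdet, one_mul]
      _ = T * (1 - P ^ n) := by rw [mul_neg_geom_sum]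
  -- entrywise convergence of partial sums to T
  have hTen : ∀ i j, Tendsto (fun n : ℕ => (∑ k ∈ Finset.range n, P ^ k) i j)
      atTop (nhds (T i j)) := by
    intro i j
    have h0 : ∀ n : ℕ, (∑ k ∈ Finset.range n, P ^ k) i j
        = ∑ l, T i l * ((1 : Matrix S S ℝ) l j - (P ^ n) l j) := by
      intro n
      rw [hAn n, Matrix.mul_apply]
      simp [Matrix.sub_apply]
    have hlim : Tendsto (fun n : ℕ => ∑ l, T i l * ((1 : Matrix S S ℝ) l j - (P ^ n) l j))
        atTop (nhds (∑ l, T i l * ((1 : Matrix S S ℝ) l j - 0))) := by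
      refine tendsto_finset_sum _ fun l _ => ?_
      exact tendsto_const_nhds.mul (tendsto_const_nhds.sub (stmt6_tendsto P hnn hm l j))
    have hval : (∑ l, T i l * ((1 : Matrix S S ℝ) l j - 0)) = T i j := by
      simp only [sub_zero]
      rw [← Matrix.mul_apply, Matrix.mul_one]
    rw [← hval]
    simpa only [← h0] using hlim
  -- per-entry HasSum
  have hentry : ∀ i j, HasSum (fun k : ℕ => (P ^ k) i j) (T i j) := by
    intro i j
    have hps : ∀ n : ℕ, ∑ k ∈ Finset.range n, (P ^ k) i j
        = (∑ k ∈ Finset.range n, P ^ k) i j := by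
      intro n
      simp [Matrix.sum_apply]
    have htend : Tendsto (fun n : ℕ => ∑ k ∈ Finset.range n, (P ^ k) i j)
        atTop (nhds (T i j)) := by
      simpa only [hps] using hTen i j
    have hmono : Monotone (fun n : ℕ => ∑ k ∈ Finset.range n, (P ^ k) i j) := by
      intro a b hab
      exact Finset.sum_le_sum_of_subset_of_nonneg
        (Finset.range_subset_range.2 hab) (fun k _ _ => stmt6_pow_nn P hnn k i j)
    have hbound : ∀ n : ℕ, ∑ k ∈ Finset.range n, (P ^ k) i j ≤ T i j :=
      fun n => hmono.ge_of_tendsto htend n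
    have hsum : Summable (fun k : ℕ => (P ^ k) i j) :=
      summable_of_sum_range_le (fun k => stmt6_pow_nn P hnn k i j) hbound
    have := hsum.hasSum
    have heq : ∑' k : ℕ, (P ^ k) i j = T i j :=
      tendsto_nhds_unique this.tendsto_sum_nat htend
    rwa [heq] at this
  have h2 : HasSum (fun k : ℕ => P ^ k) T := by
    refine Pi.hasSum.2 fun i => Pi.hasSum.2 fun j => hentry i j
  have h3 : ∀ i j, 0 ≤ T i j := by
    intro i j
    refine ge_of_tendsto' (hTen i j) fun n => ?_
    rw [Matrix.sum_apply]
    exact Finset.sum_nonneg fun k _ => stmt6_pow_nn P hnn k i j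
  exact ⟨h1, h2, h3⟩
end

section
/- Suppose there exists τ̂ ∈ ℝ^N with τ̂_i < φ_i((λ_a + τ̂_{j_a})_{a∈A}) for every node i ≠ d, let (τ, z) solve the dynamic programming system at λ, fix a source node s ∈ N and a scalar x ≥ 0. Then the system of flow conservation equations in the unknowns (v, y) ∈ ℝ^A × ℝ^{N∖{d}} given by: v_a = y_{i_a} · ∂φ_{i_a}/∂z_a(z) for every arc a with i_a ≠ d, and y_i = x·δ_{i,s} + Σ_{a : j_a = i} v_a for every node i ≠ d (where δ_{i,s} = 1 if i = s and 0 otherwise), has a unique solution, given by y = (I − P̂(z)ᵀ)^{-1} δ x and v_a = y_{i_a} · ∂φ_{i_a}/∂z_a(z), and this solution satisfies y ≥ 0 and v ≥ 0 componentwise. -/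
open Finset Matrix


open Finset

private lemma translate_aux {A : Type} [Fintype A]
    (f : (A → ℝ) → ℝ) (L : (A → ℝ) → ((A → ℝ) →L[ℝ] ℝ))
    (hL : ∀ u, HasFDerivAt f (L u) u)
    (e : A → ℝ) (he : ∀ u, L u e = 1) (u : A → ℝ) (c : ℝ) :
    f (u + c • e) = f u + c := by
  have hline : ∀ t : ℝ, HasDerivAt (fun t : ℝ => f (u + t • e) - t) 0 t := by
    intro t
    have h1 : HasDerivAt (fun t : ℝ => u + t • e) e t := by
      simpa using ((hasDerivAt_id t).smul_const e).const_add u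
    have h2 : HasDerivAt (fun t : ℝ => f (u + t • e)) (L (u + t • e) e) t :=
      (hL (u + t • e)).comp_hasDerivAt t h1
    rw [he] at h2
    have h3 := h2.sub (hasDerivAt_id' t); rw [sub_self] at h3; exact h3
  have hconst : ∀ s t : ℝ, f (u + s • e) - s = f (u + t • e) - t := by
    intro s t
    exact is_const_of_deriv_eq_zero (fun x => (hline x).differentiableAt)
      (fun x => (hline x).deriv) s t
  have := hconst c 0
  simp at this
  linarith

private lemma concave_grad_aux {A : Type} [Fintype A] (f : (A → ℝ) → ℝ)
    (hconc : ConcaveOn ℝ Set.univ f) {L : (A → ℝ) →L[ℝ] ℝ} {z : A → ℝ}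
    (hL : HasFDerivAt f L z) (u : A → ℝ) : f u ≤ f z + L (u - z) := by
  set g : ℝ → ℝ := fun t => f (z + t • (u - z)) with hg
  have hgc : ConcaveOn ℝ Set.univ g := by
    have := hconc.comp_affineMap (AffineMap.lineMap z u : ℝ →ᵃ[ℝ] (A → ℝ))
    have hpre : (AffineMap.lineMap z u : ℝ →ᵃ[ℝ] (A → ℝ)) ⁻¹' Set.univ = Set.univ := Set.preimage_univ
    rw [hpre] at this
    suffices hgeq : g = f ∘ ⇑(AffineMap.lineMap z u : ℝ →ᵃ[ℝ] (A → ℝ)) by rw [hgeq]; exact this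
    funext t
    simp only [hg, Function.comp_apply, AffineMap.lineMap_apply_module]
    congr 1
    funext a
    simp [Pi.smul_apply, Pi.add_apply, Pi.sub_apply]
    ring
  have hgd : HasDerivAt g (L (u - z)) 0 := by
    have h1 : HasDerivAt (fun t : ℝ => z + t • (u - z)) (u - z) 0 := by
      simpa using ((hasDerivAt_id (0:ℝ)).smul_const (u - z)).const_add z
    have hz0 : (fun t : ℝ => z + t • (u - z)) 0 = z := by simp
    have h2 : HasDerivAt (f ∘ fun t : ℝ => z + t • (u - z)) (L (u - z)) 0 :=
      HasFDerivAt.comp_hasDerivAt 0 (by simpa using hL) h1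
    exact h2
  have := hgc.slope_le_of_hasDerivAt (Set.mem_univ 0) (Set.mem_univ 1) zero_lt_one hgd
  rw [slope_def_field] at this
  simp [hg] at this
  have := L.map_sub u z
  linarith

private lemma pow_entry_nonneg {n : Type} [Fintype n] [DecidableEq n] {Q : Matrix n n ℝ}
    (hQ : ∀ i j, 0 ≤ Q i j) : ∀ (k : ℕ) (i j : n), 0 ≤ (Q ^ k) i j := by
  intro k
  induction k with
  | zero => intro i j; rw [pow_zero]; by_cases h : i = j <;> simp [Matrix.one_apply, h]
  | succ k ih =>
    intro i j
    rw [pow_succ, Matrix.mul_apply]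
    exact Finset.sum_nonneg fun l _ => mul_nonneg (ih i l) (hQ l j)

private lemma lemA {n : Type} [Fintype n] [DecidableEq n] (Q : Matrix n n ℝ)
    (hQ : ∀ i j, 0 ≤ Q i j) (hrow : ∀ i, ∑ j, Q i j < 1) :
    IsUnit (1 - Q).det ∧ ∀ i j, 0 ≤ (1 - Q)⁻¹ i j := by
  letI : NormedAddCommGroup (Matrix n n ℝ) := Matrix.linftyOpNormedAddCommGroup
  letI : NormedRing (Matrix n n ℝ) := Matrix.linftyOpNormedRing
  letI : NormedAlgebra ℝ (Matrix n n ℝ) := Matrix.linftyOpNormedAlgebra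
  haveI : CompleteSpace (Matrix n n ℝ) := FiniteDimensional.complete ℝ _
  have hnorm : ‖Q‖ < 1 := by
    rw [Matrix.linfty_opNorm_def]
    rw [show (1 : ℝ) = ((1 : NNReal) : ℝ) by simp]
    rw [NNReal.coe_lt_coe]
    refine Finset.sup_lt_iff (by norm_num) |>.mpr fun i _ => ?_
    rw [← NNReal.coe_lt_coe]
    push_cast
    calc (∑ j, (‖Q i j‖₊ : ℝ)) = ∑ j, Q i j := by
          refine Finset.sum_congr rfl fun j _ => ?_
          rw [coe_nnnorm, Real.norm_eq_abs, abs_of_nonneg (hQ i j)]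
      _ < 1 := hrow i
  have hu : IsUnit (1 - Q) := isUnit_one_sub_of_norm_lt_one hnorm
  refine ⟨(Matrix.isUnit_iff_isUnit_det _).mp hu, ?_⟩
  have hsummable : Summable (fun k : ℕ => Q ^ k) := summable_geometric_of_norm_lt_one hnorm
  have hinv : (1 - Q)⁻¹ = ∑' k : ℕ, Q ^ k := by
    rw [Matrix.nonsing_inv_eq_ringInverse, ← geom_series_eq_inverse Q hnorm]; rfl
  intro i j
  rw [hinv]
  -- the entry map as a continuous linear map
  have hbound : ∀ M : Matrix n n ℝ, ‖M i j‖ ≤ ‖M‖ := by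
    intro M
    have h1 : ‖M i j‖₊ ≤ ∑ j', ‖M i j'‖₊ :=
      Finset.single_le_sum (f := fun j' => ‖M i j'‖₊) (fun _ _ => zero_le) (Finset.mem_univ j)
    have h2 : (∑ j', ‖M i j'‖₊) ≤ ‖M‖₊ := by
      rw [Matrix.linfty_opNNNorm_def]
      exact Finset.le_sup (f := fun i' => ∑ j', ‖M i' j'‖₊) (Finset.mem_univ i)
    calc ‖M i j‖ = ((‖M i j‖₊ : ℝ)) := by rw [coe_nnnorm]
      _ ≤ ((‖M‖₊ : ℝ)) := by exact_mod_cast (h1.trans h2)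
      _ = ‖M‖ := by rw [coe_nnnorm]
  let E : Matrix n n ℝ →L[ℝ] ℝ :=
    LinearMap.mkContinuous
      { toFun := fun M => M i j
        map_add' := fun M M' => rfl
        map_smul' := fun c M => rfl } 1
      (fun M => by rw [one_mul]; exact hbound M)
  have hE : E (∑' k : ℕ, Q ^ k) = ∑' k : ℕ, (Q ^ k) i j := by
    rw [E.map_tsum hsummable]
    exact tsum_congr fun k => rfl
  have : (∑' k : ℕ, Q ^ k) i j = ∑' k : ℕ, (Q ^ k) i j := hE
  rw [this]
  exact tsum_nonneg fun k => pow_entry_nonneg hQ k i j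

private lemma key_inv {n : Type} [Fintype n] [DecidableEq n] (P : Matrix n n ℝ)
    (hP : ∀ i j, 0 ≤ P i j) (w : n → ℝ) (hw : ∀ i, 0 < w i)
    (hlt : ∀ i, P.mulVec w i < w i) :
    IsUnit (1 - P).det ∧ (∀ i j, 0 ≤ (1 - P)⁻¹ i j) := by
  set Q : Matrix n n ℝ := Matrix.of fun i j => (w i)⁻¹ * P i j * w j with hQdef
  have hQnn : ∀ i j, 0 ≤ Q i j := fun i j =>
    mul_nonneg (mul_nonneg (inv_nonneg.mpr (hw i).le) (hP i j)) (hw j).le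
  have hQrow : ∀ i, ∑ j, Q i j < 1 := by
    intro i
    have : ∑ j, Q i j = (w i)⁻¹ * P.mulVec w i := by
      rw [Matrix.mulVec, dotProduct, Finset.mul_sum]
      exact Finset.sum_congr rfl fun j _ => by
        simp only [hQdef, Matrix.of_apply]; ring
    rw [this]
    rw [inv_mul_lt_one₀ (hw i)] -- maybe wrong name
    exact hlt i
  obtain ⟨hdet, hinvnn⟩ := lemA Q hQnn hQrow
  have hfact : (1 : Matrix n n ℝ) - P =
      Matrix.diagonal w * (1 - Q) * Matrix.diagonal (fun i => (w i)⁻¹) := by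
    ext i j
    have hwi := (hw i).ne'
    have hwj := (hw j).ne'
    rw [Matrix.mul_diagonal, Matrix.diagonal_mul]
    simp only [Matrix.sub_apply, Matrix.one_apply, hQdef, Matrix.of_apply]
    by_cases h : i = j
    · subst h; simp only [if_pos rfl]; field_simp
    · simp [h]; field_simp
  have hdetP : IsUnit ((1 : Matrix n n ℝ) - P).det := by
    rw [hfact]
    rw [Matrix.det_mul, Matrix.det_mul, Matrix.det_diagonal, Matrix.det_diagonal]
    refine (IsUnit.mul (IsUnit.mul ?_ hdet) ?_)
    · exact isUnit_iff_ne_zero.mpr (Finset.prod_ne_zero_iff.mpr fun i _ => (hw i).ne')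
    · exact isUnit_iff_ne_zero.mpr (Finset.prod_ne_zero_iff.mpr fun i _ => (inv_ne_zero (hw i).ne'))
  refine ⟨hdetP, ?_⟩
  have hdd : Matrix.diagonal (fun i => (w i)⁻¹) * Matrix.diagonal w = (1 : Matrix n n ℝ) := by
    rw [Matrix.diagonal_mul_diagonal]
    convert Matrix.diagonal_one with i
    exact inv_mul_cancel₀ (hw i).ne'
  have hdd' : Matrix.diagonal w * Matrix.diagonal (fun i => (w i)⁻¹) = (1 : Matrix n n ℝ) := by
    rw [Matrix.diagonal_mul_diagonal]
    convert Matrix.diagonal_one with i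
    exact mul_inv_cancel₀ (hw i).ne'
  have hinvfact : ((1 : Matrix n n ℝ) - P)⁻¹ =
      Matrix.diagonal w * (1 - Q)⁻¹ * Matrix.diagonal (fun i => (w i)⁻¹) := by
    apply Matrix.inv_eq_right_inv
    rw [hfact]
    calc Matrix.diagonal w * (1 - Q) * Matrix.diagonal (fun i => (w i)⁻¹) *
          (Matrix.diagonal w * (1 - Q)⁻¹ * Matrix.diagonal (fun i => (w i)⁻¹))
        = Matrix.diagonal w * ((1 - Q) * ((Matrix.diagonal (fun i => (w i)⁻¹) *
            Matrix.diagonal w) * (1 - Q)⁻¹)) * Matrix.diagonal (fun i => (w i)⁻¹) := by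
          simp only [Matrix.mul_assoc]
      _ = 1 := by
          rw [hdd, Matrix.one_mul, Matrix.mul_nonsing_inv _ hdet, Matrix.mul_one, hdd']
  intro i j
  rw [hinvfact, Matrix.mul_diagonal, Matrix.diagonal_mul]
  exact mul_nonneg (mul_nonneg (hw i).le (hinvnn i j)) (inv_nonneg.mpr (hw j).le)

private lemma fiber_sum {N A : Type} [Fintype N] [Fintype A] [DecidableEq N]
    (m : A → N) (d : N) (p : A → Prop) [DecidablePred p] (g : A → ℝ) :
    ∑ j : {i : N // i ≠ d}, ∑ a ∈ Finset.univ.filter (fun a => p a ∧ m a = j.1), g a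
      = ∑ a ∈ Finset.univ.filter (fun a => p a ∧ m a ≠ d), g a := by
  calc ∑ j : {i : N // i ≠ d}, ∑ a ∈ Finset.univ.filter (fun a => p a ∧ m a = j.1), g a
      = ∑ j ∈ Finset.univ.filter (fun j => j ≠ d),
          ∑ a ∈ Finset.univ.filter (fun a => p a ∧ m a = j), g a :=
        (Finset.sum_subtype (p := fun j => j ≠ d)
          (Finset.univ.filter (fun j => j ≠ d)) (fun j => by simp)
          (fun j => ∑ a ∈ Finset.univ.filter (fun a => p a ∧ m a = j), g a)).symm
    _ = ∑ j ∈ Finset.univ.filter (fun j => j ≠ d),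
          ∑ a ∈ (Finset.univ.filter (fun a => p a ∧ m a ≠ d)).filter (fun a => m a = j), g a := by
        refine Finset.sum_congr rfl fun j hj => ?_
        have hjd : j ≠ d := by simpa using hj
        refine Finset.sum_congr ?_ (fun _ _ => rfl)
        ext a
        simp only [Finset.mem_filter, Finset.mem_univ, true_and]
        constructor
        · rintro ⟨h1, h2⟩; exact ⟨⟨h1, h2 ▸ hjd⟩, h2⟩
        · rintro ⟨⟨h1, _⟩, h2⟩; exact ⟨h1, h2⟩
    _ = ∑ a ∈ Finset.univ.filter (fun a => p a ∧ m a ≠ d), g a :=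
        Finset.sum_fiberwise_of_maps_to
          (fun a ha => by
            simp only [Finset.mem_filter, Finset.mem_univ, true_and] at ha ⊢
            exact ha.2) g


/-- under the strict subsolution hypothesis, for `(τ, z)` solving the
dynamic programming system at `λ`, a source `src` and `x ≥ 0`, the flow
conservation system has a unique solution `(v, y)`, given explicitly by
`y = (I − P̂(z)ᵀ)⁻¹ δ x` and `v_a = y_{i_a} ∂φ_{i_a}/∂z_a(z)`, and this solution
is componentwise nonnegative. -/
theorem stmt7 {N A : Type} [Fintype N] [Fintype A] [DecidableEq N] [DecidableEq A]
    (tail head : A → N) (d : N) (lam : A → ℝ)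
    (phi : N → (A → ℝ) → ℝ) (Dphi : N → (A → ℝ) → A → ℝ)
    (hout : ∀ i, i ≠ d → ∃ a, tail a = i)
    (hdep : ∀ i, i ≠ d → ∀ z z' : A → ℝ, (∀ a, tail a = i → z a = z' a) →
      phi i z = phi i z')
    (hconc : ∀ i, i ≠ d → ConcaveOn ℝ Set.univ (phi i))
    (hderiv : ∀ i, i ≠ d → ∀ z : A → ℝ,
      HasFDerivAt (phi i)
        (∑ a, Dphi i z a • (ContinuousLinearMap.proj a : (A → ℝ) →L[ℝ] ℝ)) z)
    (hmono : ∀ i, i ≠ d → Monotone (phi i))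
    (hDnn : ∀ i, i ≠ d → ∀ z a, 0 ≤ Dphi i z a)
    (hDzero : ∀ i, i ≠ d → ∀ (z : A → ℝ) a, tail a ≠ i → Dphi i z a = 0)
    (hDsum : ∀ i, i ≠ d → ∀ z : A → ℝ,
      ∑ a ∈ Finset.univ.filter (fun a => tail a = i), Dphi i z a = 1)
    (τhat : N → ℝ)
    (hsub : ∀ i, i ≠ d → τhat i < phi i (fun a => lam a + τhat (head a)))
    (τ : N → ℝ) (z : A → ℝ)
    (hτd : τ d = 0) (hz : ∀ a, z a = lam a + τ (head a))
    (hτ : ∀ i, i ≠ d → τ i = phi i z)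
    (src : N) (x : ℝ) (hx : 0 ≤ x) :
    -- the system of flow conservation equations in unknowns (v, y)
    let Sys : ({a : A // tail a ≠ d} → ℝ) → ({i : N // i ≠ d} → ℝ) → Prop :=
      fun v y =>
        (∀ a : {a : A // tail a ≠ d}, v a = y ⟨tail a.1, a.2⟩ * Dphi (tail a.1) z a.1) ∧
        (∀ i : {i : N // i ≠ d},
          y i = x * (if i.1 = src then 1 else 0) +
            ∑ a : {a : A // tail a ≠ d}, if head a.1 = i.1 then v a else 0)
    -- the explicit candidate solution
    let Phat : Matrix {i : N // i ≠ d} {i : N // i ≠ d} ℝ :=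
      Matrix.of fun i j =>
        ∑ a ∈ Finset.univ.filter (fun a => tail a = i.1 ∧ head a = j.1), Dphi i.1 z a
    let yStar : {i : N // i ≠ d} → ℝ :=
      ((1 - Phat.transpose)⁻¹).mulVec (fun i => if i.1 = src then x else 0)
    let vStar : {a : A // tail a ≠ d} → ℝ :=
      fun a => yStar ⟨tail a.1, a.2⟩ * Dphi (tail a.1) z a.1
    Sys vStar yStar ∧
    (∀ v y, Sys v y → v = vStar ∧ y = yStar) ∧
    (∀ i, 0 ≤ yStar i) ∧ (∀ a, 0 ≤ vStar a) := by
  intro Sys Phat yStar vStar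
  classical
  have hPhat_nn : ∀ i j : {i : N // i ≠ d}, 0 ≤ Phat i j := fun i j =>
    Finset.sum_nonneg fun a _ => hDnn i.1 i.2 z a
  set c : ℝ := max (τhat d) 0 with hc
  set W : N → ℝ := fun j => τ j - τhat j + c with hWdef
  have hWd : 0 ≤ W d := by
    have : τhat d ≤ c := le_max_left _ _
    simp only [hWdef, hτd]
    linarith
  -- applying the derivative CLM
  have hLapp : ∀ (i : N) (u v : A → ℝ),
      (∑ a, Dphi i u a • (ContinuousLinearMap.proj a : (A → ℝ) →L[ℝ] ℝ)) v
        = ∑ a, Dphi i u a * v a := by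
    intro i u v
    simp [ContinuousLinearMap.sum_apply, ContinuousLinearMap.smul_apply]
  have hLsum : ∀ i, i ≠ d → ∀ u : A → ℝ, ∑ a, Dphi i u a = 1 := by
    intro i hi u
    rw [← Finset.sum_filter_add_sum_filter_not Finset.univ (fun a => tail a = i)]
    rw [hDsum i hi u]
    have h0 : ∑ a ∈ Finset.univ.filter (fun a => ¬ tail a = i), Dphi i u a = 0 :=
      Finset.sum_eq_zero fun a ha => hDzero i hi u a (by simpa using (Finset.mem_filter.mp ha).2)
    rw [h0]; ring
  -- THE KEY INEQUALITY
  have hkey : ∀ i : {i : N // i ≠ d},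
      ∑ a, Dphi i.1 z a * W (head a) < W i.1 := by
    rintro ⟨i, hi⟩
    set zhat : A → ℝ := fun a => lam a + (τhat (head a) - c) with hzhat
    have htrans : phi i (fun a => lam a + τhat (head a)) = phi i zhat + c := by
      have h1 : (fun a => lam a + τhat (head a)) = zhat + c • (fun _ => (1:ℝ)) := by
        funext a; simp [hzhat]; ring
      rw [h1]
      exact translate_aux (phi i)
        (fun u => ∑ a, Dphi i u a • (ContinuousLinearMap.proj a : (A → ℝ) →L[ℝ] ℝ))
        (fun u => hderiv i hi u) (fun _ => 1)
        (fun u => by rw [hLapp]; simpa using hLsum i hi u) zhat c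
    have hgrad := concave_grad_aux (phi i) (hconc i hi) (hderiv i hi z) zhat
    rw [hLapp] at hgrad
    have hdiff : ∀ a, (zhat - z) a = -(W (head a)) := by
      intro a
      simp only [Pi.sub_apply, hzhat, hWdef]
      rw [hz a]; ring
    have hsum2 : ∑ a, Dphi i z a * (zhat - z) a = -∑ a, Dphi i z a * W (head a) := by
      rw [← Finset.sum_neg_distrib]
      exact Finset.sum_congr rfl fun a _ => by rw [hdiff a]; ring
    have h0 := hsub i hi
    rw [htrans] at h0
    rw [hsum2] at hgrad
    have hτi := hτ i hi
    have hWi : W i = τ i - τhat i + c := rfl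
    linarith
  set w : {i : N // i ≠ d} → ℝ := fun i => W i.1 with hwdef
  -- Phat mulVec w
  have hmv : ∀ i : {i : N // i ≠ d}, Phat.mulVec w i
      = ∑ a ∈ Finset.univ.filter (fun a => tail a = i.1 ∧ head a ≠ d),
          (Dphi i.1 z a * W (head a)) := by
    intro i
    rw [← fiber_sum head d (fun a => tail a = i.1) (fun a => Dphi i.1 z a * W (head a))]
    rw [Matrix.mulVec, dotProduct]
    refine Finset.sum_congr rfl fun j _ => ?_
    show Phat i j * W j.1 = _
    have : Phat i j = ∑ a ∈ Finset.univ.filter (fun a => tail a = i.1 ∧ head a = j.1),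
        Dphi i.1 z a := rfl
    rw [this, Finset.sum_mul]
    refine Finset.sum_congr rfl fun a ha => ?_
    have hh : head a = j.1 := (Finset.mem_filter.mp ha).2.2
    rw [hh]
  -- row sums of Phat are ≤ 1
  have hrowsum : ∀ i : {i : N // i ≠ d}, ∑ j, Phat i j ≤ 1 := by
    intro i
    have h1 : ∑ j, Phat i j
        = ∑ a ∈ Finset.univ.filter (fun a => tail a = i.1 ∧ head a ≠ d), Dphi i.1 z a :=
      fiber_sum head d (fun a => tail a = i.1) (Dphi i.1 z)
    rw [h1, ← hDsum i.1 i.2 z]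
    refine Finset.sum_le_sum_of_subset_of_nonneg ?_ (fun a _ _ => hDnn i.1 i.2 z a)
    intro a ha
    simp only [Finset.mem_filter, Finset.mem_univ, true_and] at ha ⊢
    exact ha.1
  -- Phat.mulVec w < w
  have hlt : ∀ i : {i : N // i ≠ d}, Phat.mulVec w i < w i := by
    intro i
    rw [hmv i]
    calc ∑ a ∈ Finset.univ.filter (fun a => tail a = i.1 ∧ head a ≠ d),
          (Dphi i.1 z a * W (head a))
        ≤ ∑ a, Dphi i.1 z a * W (head a) := by
          refine Finset.sum_le_sum_of_subset_of_nonneg (Finset.filter_subset _ _) ?_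
          intro a _ ha
          simp only [Finset.mem_filter, Finset.mem_univ, true_and, not_and, not_ne_iff] at ha
          by_cases ht : tail a = i.1
          · rw [ha ht]
            exact mul_nonneg (hDnn i.1 i.2 z a) hWd
          · rw [hDzero i.1 i.2 z a ht]; simp
      _ < w i := hkey i
  -- positivity of w
  have hpos : ∀ i : {i : N // i ≠ d}, 0 < w i := by
    intro i0
    obtain ⟨m, -, hm⟩ := Finset.exists_min_image Finset.univ w ⟨i0, Finset.mem_univ i0⟩
    have hmpos : 0 < w m := by
      by_contra hle
      push_neg at hle
      have h1 : ∑ j, Phat m j * w m ≤ Phat.mulVec w m := by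
        rw [Matrix.mulVec, dotProduct]
        refine Finset.sum_le_sum fun j _ => ?_
        exact mul_le_mul_of_nonneg_left (hm j (Finset.mem_univ j)) (hPhat_nn m j)
      have h2 : (1:ℝ) * w m ≤ (∑ j, Phat m j) * w m :=
        mul_le_mul_of_nonpos_right (hrowsum m) hle
      rw [← Finset.sum_mul] at h1
      have := hlt m
      linarith
    exact lt_of_lt_of_le hmpos (hm i0 (Finset.mem_univ i0))
  obtain ⟨hdetu, hinvP⟩ := key_inv Phat hPhat_nn w hpos hlt
  have hT : (1 : Matrix {i : N // i ≠ d} {i : N // i ≠ d} ℝ) - Phat.transpose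
      = (1 - Phat).transpose := by
    rw [Matrix.transpose_sub, Matrix.transpose_one]
  have hdetT : IsUnit ((1 - Phat.transpose)).det := by
    rw [hT, Matrix.det_transpose]; exact hdetu
  have hinvT : ∀ i j, 0 ≤ (1 - Phat.transpose)⁻¹ i j := by
    intro i j
    rw [hT, ← Matrix.transpose_nonsing_inv]
    exact hinvP j i
  -- nonnegativity of yStar
  have hynn : ∀ i, 0 ≤ yStar i := by
    intro i
    show 0 ≤ ((1 - Phat.transpose)⁻¹).mulVec (fun i => if i.1 = src then x else 0) i
    rw [Matrix.mulVec, dotProduct]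
    refine Finset.sum_nonneg fun j _ => mul_nonneg (hinvT i j) ?_
    split <;> simp [hx]
  have hvnn : ∀ a, 0 ≤ vStar a := fun a =>
    mul_nonneg (hynn _) (hDnn (tail a.1) a.2 z a.1)
  -- combinatorial bridge
  have hbridge : ∀ (y : {i : N // i ≠ d} → ℝ) (i : {i : N // i ≠ d}),
      (∑ a : {a : A // tail a ≠ d},
        if head a.1 = i.1 then y ⟨tail a.1, a.2⟩ * Dphi (tail a.1) z a.1 else 0)
        = Phat.transpose.mulVec y i := by
    intro y i
    set Y : N → ℝ := fun j => if h : j = d then 0 else y ⟨j, h⟩ with hY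
    have hstep1 : (∑ a : {a : A // tail a ≠ d},
        if head a.1 = i.1 then y ⟨tail a.1, a.2⟩ * Dphi (tail a.1) z a.1 else 0)
        = ∑ a ∈ Finset.univ.filter (fun a => head a = i.1 ∧ tail a ≠ d),
            Y (tail a) * Dphi (tail a) z a := by
      have he : ∀ a : {a : A // tail a ≠ d},
          (if head a.1 = i.1 then y ⟨tail a.1, a.2⟩ * Dphi (tail a.1) z a.1 else 0)
            = (if head a.1 = i.1 then Y (tail a.1) * Dphi (tail a.1) z a.1 else 0) := by
        intro a
        have : Y (tail a.1) = y ⟨tail a.1, a.2⟩ := by simp only [hY, dif_neg a.2]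
        rw [this]
      rw [Finset.sum_congr rfl (fun a _ => he a)]
      rw [← Finset.sum_subtype (p := fun a => tail a ≠ d)
          (Finset.univ.filter (fun a => tail a ≠ d)) (fun a => by simp)
          (fun a => if head a = i.1 then Y (tail a) * Dphi (tail a) z a else 0)]
      rw [← Finset.sum_filter]
      rw [Finset.filter_filter]
      refine Finset.sum_congr ?_ (fun _ _ => rfl)
      ext a
      simp only [Finset.mem_filter, Finset.mem_univ, true_and]
      tauto
    rw [hstep1]
    rw [← fiber_sum tail d (fun a => head a = i.1) (fun a => Y (tail a) * Dphi (tail a) z a)]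
    rw [Matrix.mulVec, dotProduct]
    refine Finset.sum_congr rfl fun j _ => ?_
    symm
    show Phat.transpose i j * y j = _
    have hPT : Phat.transpose i j
        = ∑ a ∈ Finset.univ.filter (fun a => tail a = j.1 ∧ head a = i.1), Dphi j.1 z a := rfl
    rw [hPT, Finset.sum_mul]
    rw [show (Finset.univ.filter (fun a => head a = i.1 ∧ tail a = j.1))
        = (Finset.univ.filter (fun a => tail a = j.1 ∧ head a = i.1)) by
      ext a; simp only [Finset.mem_filter, Finset.mem_univ, true_and]; tauto]
    refine Finset.sum_congr rfl fun a ha => ?_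
    have hta : tail a = j.1 := (Finset.mem_filter.mp ha).2.1
    have htd : tail a ≠ d := hta ▸ j.2
    have hYa : Y (tail a) = y j := by
      simp only [hY, dif_neg htd]
      congr 1
      exact Subtype.ext hta
    rw [hYa, hta]
    ring
  -- matrix form of yStar equation
  have hMy : (1 - Phat.transpose).mulVec yStar = (fun i => if i.1 = src then x else 0) := by
    show (1 - Phat.transpose).mulVec
      (((1 - Phat.transpose)⁻¹).mulVec (fun i => if i.1 = src then x else 0)) = _
    rw [Matrix.mulVec_mulVec, Matrix.mul_nonsing_inv _ hdetT, Matrix.one_mulVec]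
  refine ⟨⟨fun a => rfl, ?_⟩, ?_, hynn, hvnn⟩
  · -- flow conservation for yStar
    intro i
    have h1 := congrFun hMy i
    rw [Matrix.sub_mulVec, Matrix.one_mulVec, Pi.sub_apply] at h1
    have h2 := hbridge yStar i
    have h3 : x * (if i.1 = src then 1 else 0) = (if i.1 = src then x else 0) := by
      split <;> ring
    rw [h3]
    have : (∑ a : {a : A // tail a ≠ d}, if head a.1 = i.1 then vStar a else 0)
        = Phat.transpose.mulVec yStar i := h2
    rw [this]
    linarith
  · -- uniqueness
    rintro v y ⟨h1, h2⟩
    have hMyy : (1 - Phat.transpose).mulVec y = (fun i => if i.1 = src then x else 0) := by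
      funext i
      rw [Matrix.sub_mulVec, Matrix.one_mulVec, Pi.sub_apply]
      rw [← hbridge y i]
      have hveq : ∀ a : {a : A // tail a ≠ d},
          (if head a.1 = i.1 then v a else 0)
            = (if head a.1 = i.1 then y ⟨tail a.1, a.2⟩ * Dphi (tail a.1) z a.1 else 0) :=
        fun a => by rw [h1 a]
      have h2i := h2 i
      rw [Finset.sum_congr rfl (fun a _ => hveq a)] at h2i
      rw [h2i]
      split <;> ring
    have hy : y = yStar := by
      calc y = (1 : Matrix {i : N // i ≠ d} {i : N // i ≠ d} ℝ).mulVec y :=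
            (Matrix.one_mulVec y).symm
        _ = ((1 - Phat.transpose)⁻¹ * (1 - Phat.transpose)).mulVec y := by
            rw [Matrix.nonsing_inv_mul _ hdetT]
        _ = ((1 - Phat.transpose)⁻¹).mulVec ((1 - Phat.transpose).mulVec y) :=
            (Matrix.mulVec_mulVec _ _ _).symm
        _ = yStar := by rw [hMyy]
    refine ⟨?_, hy⟩
    funext a
    rw [h1 a, hy]
end

section
/- Suppose there exists τ̂ ∈ ℝ^N with τ̂_i < φ_i((λ_a + τ̂_{j_a})_{a∈A}) for every node i ≠ d. If (τ¹, z¹) and (τ², z²) both solve the dynamic programming system at λ, then τ¹ = τ² and z¹ = z². -/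
open Filter Set Finset

/-- Tangent-line inequality for concave differentiable functions. -/
lemma stmt8_tangent_le {E : Type*} [NormedAddCommGroup E] [NormedSpace ℝ E]
    {f : E → ℝ} {L : E →L[ℝ] ℝ} (hc : ConcaveOn ℝ Set.univ f)
    {y : E} (hd : HasFDerivAt f L y) (x : E) : f x ≤ f y + L (x - y) := by
  set g : ℝ → ℝ := fun t => f (y + t • (x - y)) with hgdef
  have hline : HasDerivAt (fun t : ℝ => y + t • (x - y)) (x - y) 0 := by
    simpa using ((hasDerivAt_id (0:ℝ)).smul_const (x - y)).const_add y
  have hg0 : HasDerivAt g (L (x - y)) 0 := by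
    have hd' : HasFDerivAt f L ((fun t : ℝ => y + t • (x - y)) 0) := by simpa using hd
    exact hd'.comp_hasDerivAt 0 hline
  have key : ∀ t ∈ Set.Ioc (0:ℝ) 1, f x - f y ≤ slope g 0 t := by
    intro t ht
    have hcc := hc.2 (Set.mem_univ y) (Set.mem_univ x)
      (by linarith [ht.2] : (0:ℝ) ≤ 1 - t) (le_of_lt ht.1) (by ring)
    have heq : y + t • (x - y) = (1-t) • y + t • x := by
      rw [smul_sub, sub_smul, one_smul]; abel
    have hgt : (1-t) * f y + t * f x ≤ g t := by
      simpa [hgdef, heq, smul_eq_mul] using hcc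
    have hg00 : g 0 = f y := by simp [hgdef]
    rw [slope_def_field, hg00, sub_zero, le_div_iff₀ ht.1]
    nlinarith [hgt]
  have htend : Tendsto (slope g 0) (nhdsWithin 0 (Set.Ioi 0)) (nhds (L (x - y))) :=
    (hasDerivAt_iff_tendsto_slope.1 hg0).mono_left
      (nhdsWithin_mono _ (fun t ht => ne_of_gt ht))
  have hfin : f x - f y ≤ L (x - y) :=
    ge_of_tendsto htend (Filter.eventually_of_mem
      (Ioc_mem_nhdsGT_of_mem (Set.left_mem_Ico.2 zero_lt_one)) key)
  linarith

/-- Comparison: a strict subsolution lies below a solution, up to its value at `d`. -/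
lemma stmt8_compare {N A : Type} [Fintype N] [Fintype A] [DecidableEq N] [DecidableEq A]
    (tail head : A → N) (d : N) (lam : A → ℝ)
    (phi : N → (A → ℝ) → ℝ) (Dphi : N → (A → ℝ) → A → ℝ)
    (hconc : ∀ i, i ≠ d → ConcaveOn ℝ Set.univ (phi i))
    (hderiv : ∀ i, i ≠ d → ∀ z : A → ℝ,
      HasFDerivAt (phi i)
        (∑ a, Dphi i z a • (ContinuousLinearMap.proj a : (A → ℝ) →L[ℝ] ℝ)) z)
    (hDnn : ∀ i, i ≠ d → ∀ z a, 0 ≤ Dphi i z a)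
    (hDzero : ∀ i, i ≠ d → ∀ (z : A → ℝ) a, tail a ≠ i → Dphi i z a = 0)
    (hDsum : ∀ i, i ≠ d → ∀ z : A → ℝ,
      ∑ a ∈ Finset.univ.filter (fun a => tail a = i), Dphi i z a = 1)
    (σ : N → ℝ) (hσ : ∀ i, i ≠ d → σ i < phi i (fun a => lam a + σ (head a)))
    (τ : N → ℝ) (z : A → ℝ)
    (hz : ∀ a, z a = lam a + τ (head a))
    (hτ : ∀ i, i ≠ d → τ i = phi i z) :
    ∀ j, σ j - τ j ≤ σ d - τ d := by
  obtain ⟨i, -, hmax⟩ := Finset.exists_max_image Finset.univ (fun j => σ j - τ j)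
    ⟨d, Finset.mem_univ d⟩
  have hmax' : ∀ j, σ j - τ j ≤ σ i - τ i := fun j => hmax j (Finset.mem_univ j)
  by_cases hid : i = d
  · intro j; rw [← hid]; exact hmax' j
  · exfalso
    set zσ : A → ℝ := fun a => lam a + σ (head a) with hzσ
    have h1 : σ i < phi i zσ := hσ i hid
    have h2 : τ i = phi i z := hτ i hid
    have htan := stmt8_tangent_le (hconc i hid) (hderiv i hid z) zσ
    have hLval : (∑ a, Dphi i z a • (ContinuousLinearMap.proj a : (A → ℝ) →L[ℝ] ℝ))
        (zσ - z) = ∑ a, Dphi i z a * (zσ a - z a) := by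
      simp [ContinuousLinearMap.sum_apply, ContinuousLinearMap.smul_apply, smul_eq_mul]
    have hterm : ∀ a, Dphi i z a * (zσ a - z a)
        = Dphi i z a * (σ (head a) - τ (head a)) := by
      intro a; rw [hz a]; simp only [hzσ]; ring
    have hsum_eq : ∑ a, Dphi i z a * (zσ a - z a)
        = ∑ a ∈ Finset.univ.filter (fun a => tail a = i),
            Dphi i z a * (σ (head a) - τ (head a)) := by
      rw [Finset.sum_congr rfl (fun a _ => hterm a)]
      refine (Finset.sum_filter_of_ne ?_).symm
      intro a _ hne
      by_contra hta
      exact hne (by rw [hDzero i hid z a (by simpa using hta)]; ring)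
    have hsum_le : ∑ a ∈ Finset.univ.filter (fun a => tail a = i),
        Dphi i z a * (σ (head a) - τ (head a)) ≤ σ i - τ i := by
      calc ∑ a ∈ Finset.univ.filter (fun a => tail a = i),
            Dphi i z a * (σ (head a) - τ (head a))
          ≤ ∑ a ∈ Finset.univ.filter (fun a => tail a = i),
            Dphi i z a * (σ i - τ i) := by
            refine Finset.sum_le_sum fun a _ => ?_
            exact mul_le_mul_of_nonneg_left (hmax' (head a)) (hDnn i hid z a)
        _ = σ i - τ i := by rw [← Finset.sum_mul, hDsum i hid z, one_mul]
    rw [hLval, hsum_eq] at htan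
    linarith

/-- If `x ≤ t * c` for all `t ∈ (0,1]` then `x ≤ 0`. -/
lemma stmt8_small {x c : ℝ} (h : ∀ t : ℝ, 0 < t → t ≤ 1 → x ≤ t * c) : x ≤ 0 := by
  by_contra hx
  push_neg at hx
  rcases le_or_gt c 0 with hc | hc
  · have := h 1 zero_lt_one le_rfl; linarith
  · have ht1 : (0:ℝ) < min 1 (x / (2 * c)) :=
      lt_min zero_lt_one (div_pos hx (by linarith))
    have := h (min 1 (x / (2 * c))) ht1 (min_le_left _ _)
    have h2 : min 1 (x / (2 * c)) * c ≤ (x / (2 * c)) * c :=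
      mul_le_mul_of_nonneg_right (min_le_right _ _) (le_of_lt hc)
    have h3 : (x / (2 * c)) * c = x / 2 := by field_simp
    linarith

/-- One-sided comparison between two solutions. -/
lemma stmt8_le {N A : Type} [Fintype N] [Fintype A] [DecidableEq N] [DecidableEq A]
    (tail head : A → N) (d : N) (lam : A → ℝ)
    (phi : N → (A → ℝ) → ℝ) (Dphi : N → (A → ℝ) → A → ℝ)
    (hconc : ∀ i, i ≠ d → ConcaveOn ℝ Set.univ (phi i))
    (hderiv : ∀ i, i ≠ d → ∀ z : A → ℝ,
      HasFDerivAt (phi i)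
        (∑ a, Dphi i z a • (ContinuousLinearMap.proj a : (A → ℝ) →L[ℝ] ℝ)) z)
    (hDnn : ∀ i, i ≠ d → ∀ z a, 0 ≤ Dphi i z a)
    (hDzero : ∀ i, i ≠ d → ∀ (z : A → ℝ) a, tail a ≠ i → Dphi i z a = 0)
    (hDsum : ∀ i, i ≠ d → ∀ z : A → ℝ,
      ∑ a ∈ Finset.univ.filter (fun a => tail a = i), Dphi i z a = 1)
    (τhat : N → ℝ)
    (hsub : ∀ i, i ≠ d → τhat i < phi i (fun a => lam a + τhat (head a)))
    (τ₁ : N → ℝ) (z₁ : A → ℝ)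
    (hτd₁ : τ₁ d = 0) (hz₁ : ∀ a, z₁ a = lam a + τ₁ (head a))
    (hτ₁ : ∀ i, i ≠ d → τ₁ i = phi i z₁)
    (τ₂ : N → ℝ) (z₂ : A → ℝ)
    (hτd₂ : τ₂ d = 0) (hz₂ : ∀ a, z₂ a = lam a + τ₂ (head a))
    (hτ₂ : ∀ i, i ≠ d → τ₂ i = phi i z₂) :
    ∀ i, τ₁ i ≤ τ₂ i := by
  intro i
  have key : ∀ t : ℝ, 0 < t → t ≤ 1 →
      τ₁ i - τ₂ i ≤ t * (τhat d - τhat i + τ₁ i) := by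
    intro t ht0 ht1
    set σ : N → ℝ := fun j => (1 - t) * τ₁ j + t * τhat j with hσdef
    set zhat : A → ℝ := fun a => lam a + τhat (head a) with hzhatdef
    have hσsub : ∀ j, j ≠ d → σ j < phi j (fun a => lam a + σ (head a)) := by
      intro j hj
      have heq : (fun a => lam a + σ (head a)) = (1 - t) • z₁ + t • zhat := by
        funext a
        simp only [Pi.add_apply, Pi.smul_apply, smul_eq_mul, hσdef, hzhatdef, hz₁ a]
        ring
      have hcc := (hconc j hj).2 (Set.mem_univ z₁) (Set.mem_univ zhat)
        (by linarith : (0:ℝ) ≤ 1 - t) (le_of_lt ht0) (by ring)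
      have hstrict : σ j < (1 - t) * phi j z₁ + t * phi j zhat := by
        have h1 : τhat j < phi j zhat := hsub j hj
        have h2 : τ₁ j = phi j z₁ := hτ₁ j hj
        have := mul_lt_mul_of_pos_left h1 ht0
        simp only [hσdef]
        nlinarith
      rw [heq]
      calc σ j < (1 - t) * phi j z₁ + t * phi j zhat := hstrict
        _ = (1 - t) • phi j z₁ + t • phi j zhat := by simp [smul_eq_mul]
        _ ≤ phi j ((1 - t) • z₁ + t • zhat) := hcc
    have hcmp := stmt8_compare tail head d lam phi Dphi hconc hderiv hDnn hDzero
      hDsum σ hσsub τ₂ z₂ hz₂ hτ₂ i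
    simp only [hσdef] at hcmp
    rw [hτd₂, hτd₁] at hcmp
    nlinarith [hcmp]
  linarith [stmt8_small key]

/-- under the strict subsolution hypothesis, the dynamic programming
system at `λ` has at most one solution `(τ, z)`. -/
theorem stmt8 {N A : Type} [Fintype N] [Fintype A] [DecidableEq N] [DecidableEq A]
    (tail head : A → N) (d : N) (lam : A → ℝ)
    (phi : N → (A → ℝ) → ℝ) (Dphi : N → (A → ℝ) → A → ℝ)
    (hout : ∀ i, i ≠ d → ∃ a, tail a = i)
    (hdep : ∀ i, i ≠ d → ∀ z z' : A → ℝ, (∀ a, tail a = i → z a = z' a) →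
      phi i z = phi i z')
    (hconc : ∀ i, i ≠ d → ConcaveOn ℝ Set.univ (phi i))
    (hderiv : ∀ i, i ≠ d → ∀ z : A → ℝ,
      HasFDerivAt (phi i)
        (∑ a, Dphi i z a • (ContinuousLinearMap.proj a : (A → ℝ) →L[ℝ] ℝ)) z)
    (hmono : ∀ i, i ≠ d → Monotone (phi i))
    (hDnn : ∀ i, i ≠ d → ∀ z a, 0 ≤ Dphi i z a)
    (hDzero : ∀ i, i ≠ d → ∀ (z : A → ℝ) a, tail a ≠ i → Dphi i z a = 0)
    (hDsum : ∀ i, i ≠ d → ∀ z : A → ℝ,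
      ∑ a ∈ Finset.univ.filter (fun a => tail a = i), Dphi i z a = 1)
    (τhat : N → ℝ)
    (hsub : ∀ i, i ≠ d → τhat i < phi i (fun a => lam a + τhat (head a)))
    (τ₁ : N → ℝ) (z₁ : A → ℝ)
    (hτd₁ : τ₁ d = 0) (hz₁ : ∀ a, z₁ a = lam a + τ₁ (head a))
    (hτ₁ : ∀ i, i ≠ d → τ₁ i = phi i z₁)
    (τ₂ : N → ℝ) (z₂ : A → ℝ)
    (hτd₂ : τ₂ d = 0) (hz₂ : ∀ a, z₂ a = lam a + τ₂ (head a))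
    (hτ₂ : ∀ i, i ≠ d → τ₂ i = phi i z₂) :
    τ₁ = τ₂ ∧ z₁ = z₂ := by
  have h12 := stmt8_le tail head d lam phi Dphi hconc hderiv hDnn hDzero hDsum
    τhat hsub τ₁ z₁ hτd₁ hz₁ hτ₁ τ₂ z₂ hτd₂ hz₂ hτ₂
  have h21 := stmt8_le tail head d lam phi Dphi hconc hderiv hDnn hDzero hDsum
    τhat hsub τ₂ z₂ hτd₂ hz₂ hτ₂ τ₁ z₁ hτd₁ hz₁ hτ₁
  have hτ : τ₁ = τ₂ := funext fun i => le_antisymm (h12 i) (h21 i)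
  exact ⟨hτ, funext fun a => by rw [hz₁ a, hz₂ a, hτ]⟩
end

section
/- Let α ∈ (0,1), let λ¹, λ² ∈ ℝ^A, and set λ^α = αλ¹ + (1−α)λ². Assume λ¹, λ², λ^α all belong to the domain 𝒫. If (τ¹, z¹) solves the dynamic programming system at λ¹, (τ², z²) solves it at λ², and (τ^α, z^α) solves it at λ^α, then τ^α_i ≥ α τ¹_i + (1−α) τ²_i for every node i ∈ N. -/
lemma concave_grad {E : Type*} [NormedAddCommGroup E] [NormedSpace ℝ E]
    {f : E → ℝ} {L : E →L[ℝ] ℝ} {z : E}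
    (hf : ConcaveOn ℝ Set.univ f) (hL : HasFDerivAt f L z) (y : E) :
    f y ≤ f z + L (y - z) := by
  set c : ℝ → E := fun t => z + t • (y - z) with hc
  have hc0 : c 0 = z := by simp [hc]
  have hc1 : c 1 = y := by simp [hc]
  have hcd : HasDerivAt c (y - z) 0 := by
    simpa [hc] using ((hasDerivAt_id (0 : ℝ)).smul_const (y - z)).const_add z
  have hg : HasDerivAt (fun t => f (c t)) (L (y - z)) 0 := by
    have := (hc0.symm ▸ hL : HasFDerivAt f L (c 0)).comp_hasDerivAt 0 hcd
    exact this
  have hgc : ConcaveOn ℝ Set.univ (fun t => f (c t)) := by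
    have : (fun t => f (c t)) = f ∘ (AffineMap.lineMap z y : ℝ →ᵃ[ℝ] E) := by
      funext t
      simp [hc, AffineMap.lineMap_apply, add_comm]
    rw [this]
    have := hf.comp_affineMap (AffineMap.lineMap z y : ℝ →ᵃ[ℝ] E)
    simpa [Set.preimage_univ] using this
  have hcv : ConvexOn ℝ Set.univ (fun t => -(f (c t))) := hgc.neg
  have hs := hcv.le_slope_of_hasDerivAt (Set.mem_univ (0:ℝ)) (Set.mem_univ (1:ℝ))
    one_pos hg.neg
  simp [slope, hc0, hc1] at hs
  have hms := L.map_sub y z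
  linarith


/-- `IsPathTo tail head d i p` : `p` is a list of arcs forming a directed path
from node `i` to the destination `d`. -/
def IsPathTo {N A : Type} (tail head : A → N) (d : N) : N → List A → Prop
  | i, [] => i = d
  | i, a :: p => tail a = i ∧ IsPathTo tail head d (head a) p

/-- concavity of the expected delays `τ` as a function of the link
delays `λ`: if `λ¹, λ², λ^α = αλ¹+(1−α)λ²` belong to the domain `𝒫`, and
`(τ¹,z¹)`, `(τ²,z²)`, `(τ^α,z^α)` solve the dynamic programming system at
`λ¹`, `λ²`, `λ^α` respectively, then `τ^α ≥ ατ¹ + (1−α)τ²` componentwise. -/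
theorem stmt9 {N A : Type} [Fintype N] [Fintype A] [DecidableEq N] [DecidableEq A]
    (tail head : A → N) (d : N)
    (phi : N → (A → ℝ) → ℝ) (Dphi : N → (A → ℝ) → A → ℝ)
    (hout : ∀ i, i ≠ d → ∃ a, tail a = i)
    (hconn : ∀ i, ∃ p, IsPathTo tail head d i p)
    (hdep : ∀ i, i ≠ d → ∀ z z' : A → ℝ, (∀ a, tail a = i → z a = z' a) →
      phi i z = phi i z')
    (hcont : ∀ i, i ≠ d → Continuous (phi i))
    (hconc : ∀ i, i ≠ d → ConcaveOn ℝ Set.univ (phi i))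
    (hderiv : ∀ i, i ≠ d → ∀ z : A → ℝ,
      HasFDerivAt (phi i)
        (∑ a, Dphi i z a • (ContinuousLinearMap.proj a : (A → ℝ) →L[ℝ] ℝ)) z)
    (hmono : ∀ i, i ≠ d → Monotone (phi i))
    (hmin : ∀ i, i ≠ d → ∀ z : A → ℝ, ∀ a, tail a = i → phi i z ≤ z a)
    (hDnn : ∀ i, i ≠ d → ∀ z a, 0 ≤ Dphi i z a)
    (hDzero : ∀ i, i ≠ d → ∀ (z : A → ℝ) a, tail a ≠ i → Dphi i z a = 0)
    (hDsum : ∀ i, i ≠ d → ∀ z : A → ℝ,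
      ∑ a ∈ Finset.univ.filter (fun a => tail a = i), Dphi i z a = 1)
    (α : ℝ) (hα : α ∈ Set.Ioo (0:ℝ) 1)
    (lam₁ lam₂ : A → ℝ)
    -- λ¹, λ², λ^α belong to the domain 𝒫
    (hP₁ : ∃ τhat : N → ℝ, τhat d ≤ 0 ∧
      ∀ i, i ≠ d → τhat i < phi i (fun a => lam₁ a + τhat (head a)))
    (hP₂ : ∃ τhat : N → ℝ, τhat d ≤ 0 ∧
      ∀ i, i ≠ d → τhat i < phi i (fun a => lam₂ a + τhat (head a)))
    (hPα : ∃ τhat : N → ℝ, τhat d ≤ 0 ∧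
      ∀ i, i ≠ d → τhat i <
        phi i (fun a => (α * lam₁ a + (1 - α) * lam₂ a) + τhat (head a)))
    (τ₁ : N → ℝ) (z₁ : A → ℝ)
    (hτd₁ : τ₁ d = 0) (hz₁ : ∀ a, z₁ a = lam₁ a + τ₁ (head a))
    (hτ₁ : ∀ i, i ≠ d → τ₁ i = phi i z₁)
    (τ₂ : N → ℝ) (z₂ : A → ℝ)
    (hτd₂ : τ₂ d = 0) (hz₂ : ∀ a, z₂ a = lam₂ a + τ₂ (head a))
    (hτ₂ : ∀ i, i ≠ d → τ₂ i = phi i z₂)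
    (τα : N → ℝ) (zα : A → ℝ)
    (hτdα : τα d = 0)
    (hzα : ∀ a, zα a = (α * lam₁ a + (1 - α) * lam₂ a) + τα (head a))
    (hτα : ∀ i, i ≠ d → τα i = phi i zα) :
    ∀ i, α * τ₁ i + (1 - α) * τ₂ i ≤ τα i := by

  intro i
  obtain ⟨α0, α1⟩ := hα
  set σ : N → ℝ := fun j => α * τ₁ j + (1 - α) * τ₂ j with hσ
  have hσd : σ d = 0 := by simp [hσ, hτd₁, hτd₂]
  obtain ⟨th, thd, thlt⟩ := hPα
  -- σ is a subsolution at λ^α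
  have hsub : ∀ j, j ≠ d →
      σ j ≤ phi j (fun a => (α * lam₁ a + (1 - α) * lam₂ a) + σ (head a)) := by
    intro j hj
    have hcomb := (hconc j hj).2 (Set.mem_univ z₁)
      (Set.mem_univ z₂) (le_of_lt α0) (by linarith : (0:ℝ) ≤ 1 - α)
      (by ring : α + (1 - α) = 1)
    have heq : α • z₁ + (1 - α) • z₂
        = (fun a => (α * lam₁ a + (1 - α) * lam₂ a) + σ (head a)) := by
      funext a
      simp [hz₁ a, hz₂ a, hσ]
      ring
    rw [heq] at hcomb
    calc σ j = α * phi j z₁ + (1 - α) * phi j z₂ := by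
          simp only [hσ]; rw [hτ₁ j hj, hτ₂ j hj]
    _ ≤ _ := by simpa [smul_eq_mul] using hcomb
  -- key comparison: for every t ∈ [0,1), (1-t)•th + t•σ ≤ τα
  have key : ∀ t ∈ Set.Ico (0:ℝ) 1, ∀ j, (1 - t) * th j + t * σ j ≤ τα j := by
    intro t ht j
    obtain ⟨ht0, ht1⟩ := ht
    set g : N → ℝ := fun k => (1 - t) * th k + t * σ k - τα k with hg
    obtain ⟨i₀, -, hi₀⟩ := Finset.exists_max_image Finset.univ g ⟨d, Finset.mem_univ d⟩
    have hgd : g d ≤ 0 := by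
      have : (1 - t) * th d ≤ 0 :=
        mul_nonpos_of_nonneg_of_nonpos (by linarith) thd
      simp only [hg, hσd, hτdα]
      linarith
    have hgi₀ : g i₀ ≤ 0 := by
      by_cases hi₀d : i₀ = d
      · rw [hi₀d]; exact hgd
      · exfalso
        set xhat : A → ℝ := fun a => (α * lam₁ a + (1 - α) * lam₂ a) + th (head a)
        set y : A → ℝ := fun a => (α * lam₁ a + (1 - α) * lam₂ a) + σ (head a)
        set xt : A → ℝ := fun a =>
          (α * lam₁ a + (1 - α) * lam₂ a) + ((1 - t) * th (head a) + t * σ (head a))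
        -- strict subsolution property of the convex combination
        have h1 : th i₀ < phi i₀ xhat := thlt i₀ hi₀d
        have h2 : σ i₀ ≤ phi i₀ y := hsub i₀ hi₀d
        have hcomb := (hconc i₀ hi₀d).2 (Set.mem_univ xhat)
          (Set.mem_univ y) (by linarith : (0:ℝ) ≤ 1 - t) ht0
          (by ring : 1 - t + t = 1)
        have heq : (1 - t) • xhat + t • y = xt := by
          funext a; simp [xhat, y, xt]; ring
        rw [heq] at hcomb
        have hstrict : (1 - t) * th i₀ + t * σ i₀ < phi i₀ xt := by
          have hl : (1 - t) * th i₀ < (1 - t) * phi i₀ xhat :=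
            mul_lt_mul_of_pos_left h1 (by linarith)
          have hr : t * σ i₀ ≤ t * phi i₀ y := mul_le_mul_of_nonneg_left h2 ht0
          have := hcomb
          simp only [smul_eq_mul] at this
          linarith
        -- gradient bound
        have hgrad := concave_grad (hconc i₀ hi₀d) (hderiv i₀ hi₀d zα) xt
        have hLval : (∑ a, Dphi i₀ zα a • (ContinuousLinearMap.proj a : (A → ℝ) →L[ℝ] ℝ))
            (xt - zα) = ∑ a, Dphi i₀ zα a * g (head a) := by
          rw [ContinuousLinearMap.sum_apply]
          refine Finset.sum_congr rfl (fun a _ => ?_)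
          have hxz : (xt - zα) a = g (head a) := by
            simp only [Pi.sub_apply, xt, hzα a, hg]
            ring
          simp [hxz]
        have hsum : ∑ a, Dphi i₀ zα a * g (head a) ≤ g i₀ := by
          have hrestr : ∑ a ∈ Finset.univ.filter (fun a => tail a = i₀),
              Dphi i₀ zα a * g (head a) = ∑ a, Dphi i₀ zα a * g (head a) := by
            refine Finset.sum_filter_of_ne (fun a _ hne => ?_)
            by_contra htail
            exact hne (by rw [hDzero i₀ hi₀d zα a htail, zero_mul])
          rw [← hrestr]
          calc ∑ a ∈ Finset.univ.filter (fun a => tail a = i₀), Dphi i₀ zα a * g (head a)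
              ≤ ∑ a ∈ Finset.univ.filter (fun a => tail a = i₀), Dphi i₀ zα a * g i₀ :=
                Finset.sum_le_sum (fun a _ => mul_le_mul_of_nonneg_left
                  (hi₀ (head a) (Finset.mem_univ _)) (hDnn i₀ hi₀d zα a))
            _ = g i₀ := by rw [← Finset.sum_mul, hDsum i₀ hi₀d zα, one_mul]
        rw [hLval] at hgrad
        have hταi₀ : τα i₀ = phi i₀ zα := hτα i₀ hi₀d
        have : (1 - t) * th i₀ + t * σ i₀ < τα i₀ + g i₀ := by
          calc (1 - t) * th i₀ + t * σ i₀ < phi i₀ xt := hstrict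
          _ ≤ phi i₀ zα + ∑ a, Dphi i₀ zα a * g (head a) := hgrad
          _ ≤ τα i₀ + g i₀ := by rw [hταi₀]; linarith
        simp only [hg] at this
        linarith
    have := hi₀ j (Finset.mem_univ j)
    simp only [hg] at this hgi₀
    linarith
  -- take the limit t → 1⁻
  have htend : Filter.Tendsto (fun t : ℝ => (1 - t) * th i + t * σ i)
      (nhdsWithin 1 (Set.Iio 1)) (nhds (σ i)) := by
    have hcont' : Continuous (fun t : ℝ => (1 - t) * th i + t * σ i) :=
      ((continuous_const.sub continuous_id).mul continuous_const).add
        (continuous_id.mul continuous_const)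
    have := hcont'.tendsto 1
    simp only [sub_self, zero_mul, one_mul, zero_add] at this
    exact this.mono_left nhdsWithin_le_nhds
  have hev : ∀ᶠ t in nhdsWithin (1:ℝ) (Set.Iio 1),
      (1 - t) * th i + t * σ i ≤ τα i := by
    filter_upwards [Ioo_mem_nhdsLT_of_mem (Set.mem_Ioc.2 ⟨zero_lt_one, le_refl 1⟩)]
      with t ht
    exact key t ⟨le_of_lt ht.1, ht.2⟩ i
  have := le_of_tendsto htend hev
  simpa [hσ] using this
end

section
/- Let λ¹, λ² ∈ ℝ^A with λ¹_a ≤ λ²_a for every arc a, and assume both λ¹ and λ² belong to the domain 𝒫. If (τ¹, z¹) solves the dynamic programming system at λ¹ and (τ², z²) solves it at λ², then τ¹_i ≤ τ²_i for every node i ∈ N. -/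
/-- monotonicity of the expected delays `τ` as a function of the
link delays `λ`: if `λ¹ ≤ λ²` componentwise, both in the domain `𝒫`, and
`(τ¹,z¹)`, `(τ²,z²)` solve the dynamic programming system at `λ¹`, `λ²`
respectively, then `τ¹ ≤ τ²` componentwise. -/
theorem stmt10 {N A : Type} [Fintype N] [Fintype A] [DecidableEq N] [DecidableEq A]
    (tail head : A → N) (d : N)
    (phi : N → (A → ℝ) → ℝ) (Dphi : N → (A → ℝ) → A → ℝ)
    (hout : ∀ i, i ≠ d → ∃ a, tail a = i)
    (hconn : ∀ i, ∃ p, IsPathTo tail head d i p)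
    (hdep : ∀ i, i ≠ d → ∀ z z' : A → ℝ, (∀ a, tail a = i → z a = z' a) →
      phi i z = phi i z')
    (hcont : ∀ i, i ≠ d → Continuous (phi i))
    (hconc : ∀ i, i ≠ d → ConcaveOn ℝ Set.univ (phi i))
    (hderiv : ∀ i, i ≠ d → ∀ z : A → ℝ,
      HasFDerivAt (phi i)
        (∑ a, Dphi i z a • (ContinuousLinearMap.proj a : (A → ℝ) →L[ℝ] ℝ)) z)
    (hmono : ∀ i, i ≠ d → Monotone (phi i))
    (hmin : ∀ i, i ≠ d → ∀ z : A → ℝ, ∀ a, tail a = i → phi i z ≤ z a)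
    (hDnn : ∀ i, i ≠ d → ∀ z a, 0 ≤ Dphi i z a)
    (hDzero : ∀ i, i ≠ d → ∀ (z : A → ℝ) a, tail a ≠ i → Dphi i z a = 0)
    (hDsum : ∀ i, i ≠ d → ∀ z : A → ℝ,
      ∑ a ∈ Finset.univ.filter (fun a => tail a = i), Dphi i z a = 1)
    (lam₁ lam₂ : A → ℝ) (hle : ∀ a, lam₁ a ≤ lam₂ a)
    (hP₁ : ∃ τhat : N → ℝ, τhat d ≤ 0 ∧
      ∀ i, i ≠ d → τhat i < phi i (fun a => lam₁ a + τhat (head a)))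
    (hP₂ : ∃ τhat : N → ℝ, τhat d ≤ 0 ∧
      ∀ i, i ≠ d → τhat i < phi i (fun a => lam₂ a + τhat (head a)))
    (τ₁ : N → ℝ) (z₁ : A → ℝ)
    (hτd₁ : τ₁ d = 0) (hz₁ : ∀ a, z₁ a = lam₁ a + τ₁ (head a))
    (hτ₁ : ∀ i, i ≠ d → τ₁ i = phi i z₁)
    (τ₂ : N → ℝ) (z₂ : A → ℝ)
    (hτd₂ : τ₂ d = 0) (hz₂ : ∀ a, z₂ a = lam₂ a + τ₂ (head a))
    (hτ₂ : ∀ i, i ≠ d → τ₂ i = phi i z₂) :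
    ∀ i, τ₁ i ≤ τ₂ i := by
  classical
  -- translation property: phi i (z + c) = phi i z + c
  have htrans : ∀ i, i ≠ d → ∀ z : A → ℝ, ∀ c : ℝ,
      phi i (fun a => z a + c) = phi i z + c := by
    intro i hi z c
    have hgd : ∀ t : ℝ, HasDerivAt
        (fun t : ℝ => phi i (z + t • (1 : A → ℝ)) - t) 0 t := by
      intro t
      have hcurve : HasDerivAt (fun t : ℝ => z + t • (1 : A → ℝ)) (1 : A → ℝ) t := by
        simpa using ((hasDerivAt_id t).smul_const (1 : A → ℝ)).const_add z
      have h1 := (hderiv i hi (z + t • (1 : A → ℝ))).comp_hasDerivAt t hcurve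
      have hval : (∑ a, Dphi i (z + t • (1 : A → ℝ)) a •
          (ContinuousLinearMap.proj a : (A → ℝ) →L[ℝ] ℝ)) (1 : A → ℝ) = 1 := by
        rw [ContinuousLinearMap.sum_apply]
        simp only [ContinuousLinearMap.smul_apply, ContinuousLinearMap.proj_apply,
          Pi.one_apply, smul_eq_mul, mul_one]
        rw [← Finset.sum_filter_add_sum_filter_not Finset.univ (fun a => tail a = i)]
        rw [hDsum i hi]
        have : ∑ a ∈ Finset.univ.filter (fun a => ¬ tail a = i),
            Dphi i (z + t • (1 : A → ℝ)) a = 0 := by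
          apply Finset.sum_eq_zero
          intro a ha
          exact hDzero i hi _ a (Finset.mem_filter.mp ha).2
        rw [this]; ring
      have h2 : HasDerivAt (fun t : ℝ => phi i (z + t • (1 : A → ℝ))) 1 t := by
        rw [← hval]
        exact h1
      simpa using h2.fun_sub (hasDerivAt_id t)
    have hconst := is_const_of_deriv_eq_zero
      (fun t => ((hgd t).differentiableAt : DifferentiableAt ℝ _ t))
      (fun t => (hgd t).deriv) c 0
    have hz0 : z + (0:ℝ) • (1 : A → ℝ) = z := by simp
    have hzc : z + c • (1 : A → ℝ) = fun a => z a + c := by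
      funext a; simp
    rw [hz0, hzc] at hconst
    linarith [hconst]
  -- strict subsolutions at lam₂ are below τ₂
  have hsub : ∀ τh : N → ℝ, τh d ≤ 0 →
      (∀ i, i ≠ d → τh i < phi i (fun a => lam₂ a + τh (head a))) →
      ∀ i, τh i ≤ τ₂ i := by
    intro τh hhd hhs
    obtain ⟨i₀, -, hmax⟩ := Finset.exists_max_image Finset.univ
      (fun i => τh i - τ₂ i) ⟨d, Finset.mem_univ d⟩
    have hmax' : ∀ i, τh i - τ₂ i ≤ τh i₀ - τ₂ i₀ := fun i => hmax i (Finset.mem_univ i)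
    set c := τh i₀ - τ₂ i₀ with hc
    have hc0 : c ≤ 0 := by
      by_contra hpos
      push_neg at hpos
      have hi₀d : i₀ ≠ d := by
        intro h
        rw [h] at hc
        rw [hτd₂] at hc
        linarith
      have h1 : τh i₀ < phi i₀ (fun a => lam₂ a + τh (head a)) := hhs i₀ hi₀d
      have h2 : phi i₀ (fun a => lam₂ a + τh (head a)) ≤ phi i₀ (fun a => z₂ a + c) := by
        apply hmono i₀ hi₀d
        intro a
        have := hmax' (head a)
        show lam₂ a + τh (head a) ≤ z₂ a + c
        rw [hz₂ a]
        linarith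
      have h3 : phi i₀ (fun a => z₂ a + c) = phi i₀ z₂ + c := htrans i₀ hi₀d z₂ c
      have h4 : phi i₀ z₂ = τ₂ i₀ := (hτ₂ i₀ hi₀d).symm
      rw [h3, h4] at h2
      have : τh i₀ < τh i₀ := by
        calc τh i₀ < phi i₀ (fun a => lam₂ a + τh (head a)) := h1
        _ ≤ τ₂ i₀ + c := h2
        _ = τh i₀ := by rw [hc]; ring
      exact lt_irrefl _ this
    intro i
    have := hmax' i
    linarith
  -- the convex combinations θ τ̂ + (1-θ) τ₁ are strict subsolutions at lam₂
  obtain ⟨τh, hhd, hhs⟩ := hP₁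
  have hkey : ∀ θ : ℝ, 0 < θ → θ ≤ 1 → ∀ i,
      θ * τh i + (1 - θ) * τ₁ i ≤ τ₂ i := by
    intro θ hθ hθ1
    apply hsub
    · have : (1 - θ) * τ₁ d = 0 := by rw [hτd₁]; ring
      nlinarith
    · intro i hi
      have hcc := (hconc i hi).2 (Set.mem_univ (fun a => lam₁ a + τh (head a)))
        (Set.mem_univ z₁) (le_of_lt hθ) (by linarith : (0:ℝ) ≤ 1 - θ) (by ring)
      have heq : θ • (fun a => lam₁ a + τh (head a)) + (1 - θ) • z₁ =
          (fun a => lam₁ a + (θ * τh (head a) + (1 - θ) * τ₁ (head a))) := by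
        funext a
        simp only [Pi.add_apply, Pi.smul_apply, smul_eq_mul, hz₁ a]
        ring
      rw [heq] at hcc
      have hstrict : θ * τh i + (1 - θ) * τ₁ i <
          θ • phi i (fun a => lam₁ a + τh (head a)) + (1 - θ) • phi i z₁ := by
        have h1 := hhs i hi
        have h2 := hτ₁ i hi
        simp only [smul_eq_mul]
        nlinarith
      have hmono2 : phi i (fun a => lam₁ a + (θ * τh (head a) + (1 - θ) * τ₁ (head a))) ≤
          phi i (fun a => lam₂ a + (θ * τh (head a) + (1 - θ) * τ₁ (head a))) := by
        apply hmono i hi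
        intro a
        show lam₁ a + _ ≤ lam₂ a + _
        linarith [hle a]
      calc θ * τh i + (1 - θ) * τ₁ i
          < θ • phi i (fun a => lam₁ a + τh (head a)) + (1 - θ) • phi i z₁ := hstrict
        _ ≤ phi i (fun a => lam₁ a + (θ * τh (head a) + (1 - θ) * τ₁ (head a))) := hcc
        _ ≤ _ := hmono2
  -- take θ → 0
  intro i
  apply le_of_forall_pos_le_add
  intro ε hε
  set M := |τ₁ i - τh i| + 1 with hM
  have hM0 : 0 < M := by positivity
  set θ := min 1 (ε / M) with hθdef
  have hθpos : 0 < θ := lt_min one_pos (div_pos hε hM0)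
  have hθ1 : θ ≤ 1 := min_le_left _ _
  have h := hkey θ hθpos hθ1 i
  have hθM : θ * M ≤ ε := by
    have h1 : θ ≤ ε / M := min_le_right _ _
    calc θ * M ≤ (ε / M) * M := by nlinarith
    _ = ε := by field_simp
  have habs : τ₁ i - τh i ≤ M := by
    have := le_abs_self (τ₁ i - τh i)
    linarith
  nlinarith
end

section
/- Let U ⊆ ℝ^A be open and let τ : U → ℝ^N be differentiable with τ_d(λ) = 0 and τ_i(λ) = φ_i((λ_a + τ_{j_a}(λ))_{a∈A}) for every λ ∈ U and every node i ≠ d. Fix λ ∈ U, set z_a = λ_a + τ_{j_a}(λ), and assume the matrix I − P̂(z) is invertible. Then the Jacobian matrix of the map λ ↦ (τ_i(λ))_{i≠d} at λ equals (I − P̂(z))^{-1} Q̂(z), where Q̂(z) is the matrix with rows indexed by nodes i ≠ d and columns indexed by arcs a, with entries Q̂(z)_{ia} = ∂φ_i/∂z_a(z). -/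
/-- if `τ : U → ℝ^N` is differentiable and solves the dynamic
programming equations on the open set `U`, and `I − P̂(z)` is invertible at some
`λ ∈ U` (with `z_a = λ_a + τ_{j_a}(λ)`), then the Jacobian of `λ ↦ (τ_i(λ))_{i≠d}`
at `λ` equals `(I − P̂(z))⁻¹ Q̂(z)`. -/
theorem stmt11 {N A : Type} [Fintype N] [Fintype A] [DecidableEq N] [DecidableEq A]
    (tail head : A → N) (d : N)
    (phi : N → (A → ℝ) → ℝ) (Dphi : N → (A → ℝ) → A → ℝ)
    (hout : ∀ i, i ≠ d → ∃ a, tail a = i)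
    (hdep : ∀ i, i ≠ d → ∀ z z' : A → ℝ, (∀ a, tail a = i → z a = z' a) →
      phi i z = phi i z')
    -- φ_i is continuously differentiable with partial derivatives `Dphi i`
    (hderiv : ∀ i, i ≠ d → ∀ z : A → ℝ,
      HasFDerivAt (phi i)
        (∑ a, Dphi i z a • (ContinuousLinearMap.proj a : (A → ℝ) →L[ℝ] ℝ)) z)
    (hDcont : ∀ i, i ≠ d → Continuous (fun z : A → ℝ => Dphi i z))
    (U : Set (A → ℝ)) (hU : IsOpen U)
    (τ : (A → ℝ) → N → ℝ)
    (hτdiff : ∀ lam ∈ U, ∀ i, DifferentiableAt ℝ (fun l => τ l i) lam)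
    (hτd : ∀ lam ∈ U, τ lam d = 0)
    (hτeq : ∀ lam ∈ U, ∀ i, i ≠ d →
      τ lam i = phi i (fun a => lam a + τ lam (head a)))
    (lam : A → ℝ) (hlam : lam ∈ U)
    (z : A → ℝ) (hz : ∀ a, z a = lam a + τ lam (head a))
    (Phat : Matrix {i : N // i ≠ d} {i : N // i ≠ d} ℝ)
    (hPhat : Phat = Matrix.of fun i j =>
      ∑ a ∈ Finset.univ.filter (fun a => tail a = i.1 ∧ head a = j.1), Dphi i.1 z a)
    (hinv : IsUnit ((1 : Matrix {i : N // i ≠ d} {i : N // i ≠ d} ℝ) - Phat))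
    (Qhat : Matrix {i : N // i ≠ d} A ℝ)
    (hQhat : Qhat = Matrix.of fun i a => Dphi i.1 z a) :
    ∀ (i : {i : N // i ≠ d}) (a : A),
      fderiv ℝ (fun l => τ l i.1) lam (Pi.single a 1) =
        ((1 - Phat)⁻¹ * Qhat) i a := by
  classical
  have hzg : z = fun b => lam b + τ lam (head b) := funext hz
  set J : Matrix {i : N // i ≠ d} A ℝ :=
    Matrix.of (fun i a => fderiv ℝ (fun l => τ l i.1) lam (Pi.single a 1)) with hJ
  set Dg : (A → ℝ) →L[ℝ] (A → ℝ) :=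
    ContinuousLinearMap.pi (fun b => (ContinuousLinearMap.proj b :
      (A → ℝ) →L[ℝ] ℝ) + fderiv ℝ (fun l => τ l (head b)) lam) with hDg
  have hUnhds : U ∈ nhds lam := hU.mem_nhds hlam
  have hg : HasFDerivAt (fun l : A → ℝ => fun b => l b + τ l (head b)) Dg lam := by
    rw [hDg]
    exact hasFDerivAt_pi.2 fun b =>
      ((ContinuousLinearMap.proj b).hasFDerivAt).add (hτdiff lam hlam (head b)).hasFDerivAt
  -- fderiv of τ at destination is zero
  have hd0 : fderiv ℝ (fun l => τ l d) lam = 0 := by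
    have hev : (fun l => τ l d) =ᶠ[nhds lam] fun _ => (0 : ℝ) :=
      Filter.eventually_of_mem hUnhds fun l hl => hτd l hl
    rw [hev.fderiv_eq]
    exact fderiv_const_apply 0
  -- Dphi vanishes off the out-arcs
  have hDzero : ∀ (i : N), i ≠ d → ∀ b, tail b ≠ i → Dphi i z b = 0 := by
    intro i hi b hb
    have hc : HasDerivAt (fun t : ℝ => z + t • (Pi.single b 1 : A → ℝ))
        (Pi.single b 1 : A → ℝ) 0 := by
      simpa using ((hasDerivAt_id (0 : ℝ)).smul_const (Pi.single b 1 : A → ℝ)).const_add z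
    have hc0 : z + (0 : ℝ) • (Pi.single b 1 : A → ℝ) = z := by simp
    have hphi0 : HasFDerivAt (phi i)
        (∑ a, Dphi i z a • (ContinuousLinearMap.proj a : (A → ℝ) →L[ℝ] ℝ))
        (z + (0 : ℝ) • (Pi.single b 1 : A → ℝ)) := by
      rw [hc0]; exact hderiv i hi z
    have hcomp : HasDerivAt (fun t : ℝ => phi i (z + t • (Pi.single b 1 : A → ℝ)))
        ((∑ a, Dphi i z a • (ContinuousLinearMap.proj a : (A → ℝ) →L[ℝ] ℝ))
          (Pi.single b 1)) 0 := hphi0.comp_hasDerivAt 0 hc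
    have hconst : (fun t : ℝ => phi i (z + t • (Pi.single b 1 : A → ℝ))) = fun _ => phi i z := by
      funext t
      refine (hdep i hi z (z + t • (Pi.single b 1 : A → ℝ)) fun a ha => ?_).symm
      have hab : a ≠ b := fun h => hb (h ▸ ha)
      simp [Pi.single_eq_of_ne hab]
    have hzero : HasDerivAt (fun t : ℝ => phi i (z + t • (Pi.single b 1 : A → ℝ))) 0 0 := by
      rw [hconst]; exact hasDerivAt_const 0 _
    have huniq := hcomp.unique hzero
    have happ : (∑ a, Dphi i z a • (ContinuousLinearMap.proj a : (A → ℝ) →L[ℝ] ℝ))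
        (Pi.single b 1) = Dphi i z b := by
      simp [ContinuousLinearMap.sum_apply, Pi.single_apply, mul_ite]
    rw [← happ]; exact huniq
  -- chain rule for each row
  have hmain : ∀ (i : {i : N // i ≠ d}) (a : A),
      J i a = Dphi i.1 z a + ∑ b, Dphi i.1 z b *
        fderiv ℝ (fun l => τ l (head b)) lam (Pi.single a 1) := by
    intro i a
    set L := ∑ b, Dphi i.1 z b • (ContinuousLinearMap.proj b : (A → ℝ) →L[ℝ] ℝ) with hL
    have hphi : HasFDerivAt (phi i.1) L (fun b => lam b + τ lam (head b)) :=
      hzg ▸ hderiv i.1 i.2 z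
    have hcomp : HasFDerivAt (fun l => phi i.1 (fun b => l b + τ l (head b)))
        (L.comp Dg) lam := hphi.comp lam hg
    have heq : (fun l => τ l i.1) =ᶠ[nhds lam]
        fun l => phi i.1 (fun b => l b + τ l (head b)) :=
      Filter.eventually_of_mem hUnhds fun l hl => hτeq l hl i.1 i.2
    have hfd : HasFDerivAt (fun l => τ l i.1) (L.comp Dg) lam :=
      hcomp.congr_of_eventuallyEq heq
    have hfe : fderiv ℝ (fun l => τ l i.1) lam = L.comp Dg := hfd.fderiv
    have happ : (L.comp Dg) (Pi.single a 1) =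
        ∑ b, Dphi i.1 z b * ((Pi.single a 1 : A → ℝ) b +
          fderiv ℝ (fun l => τ l (head b)) lam (Pi.single a 1)) := by
      rw [hL, hDg]
      simp [ContinuousLinearMap.sum_apply, ContinuousLinearMap.pi_apply]
    have hsingle : ∑ b, Dphi i.1 z b * (Pi.single a 1 : A → ℝ) b = Dphi i.1 z a := by
      simp [Pi.single_apply, mul_ite]
    calc J i a = (L.comp Dg) (Pi.single a 1) := by rw [hJ, Matrix.of_apply, hfe]
      _ = ∑ b, Dphi i.1 z b * ((Pi.single a 1 : A → ℝ) b +
            fderiv ℝ (fun l => τ l (head b)) lam (Pi.single a 1)) := happ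
      _ = (∑ b, Dphi i.1 z b * (Pi.single a 1 : A → ℝ) b) +
            ∑ b, Dphi i.1 z b * fderiv ℝ (fun l => τ l (head b)) lam (Pi.single a 1) := by
          rw [← Finset.sum_add_distrib]; exact Finset.sum_congr rfl fun b _ => mul_add _ _ _
      _ = _ := by rw [hsingle]
  -- the P̂-sum
  have hFsum : ∀ (i : {i : N // i ≠ d}) (a : A),
      ∑ j, Phat i j * J j a = ∑ b, Dphi i.1 z b *
        fderiv ℝ (fun l => τ l (head b)) lam (Pi.single a 1) := by
    intro i a
    set F : A → ℝ := fun b => Dphi i.1 z b *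
      fderiv ℝ (fun l => τ l (head b)) lam (Pi.single a 1) with hF
    have h1 : ∀ j : {i : N // i ≠ d}, Phat i j * J j a
        = ∑ b, if tail b = i.1 ∧ head b = j.1 then F b else 0 := by
      intro j
      rw [hPhat, Matrix.of_apply, Finset.sum_mul, Finset.sum_filter]
      refine Finset.sum_congr rfl fun b _ => ?_
      by_cases hcond : tail b = i.1 ∧ head b = j.1
      · rw [if_pos hcond, if_pos hcond]
        show Dphi i.1 z b * J j a
          = Dphi i.1 z b * fderiv ℝ (fun l => τ l (head b)) lam (Pi.single a 1)
        rw [hcond.2]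
        rfl
      · rw [if_neg hcond, if_neg hcond]
    have h2 : ∀ b, (∑ j : {i : N // i ≠ d},
        if tail b = i.1 ∧ head b = j.1 then F b else 0) = F b := by
      intro b
      by_cases htb : tail b = i.1
      · by_cases hhd : head b = d
        · have hFb : F b = 0 := by
            show Dphi i.1 z b *
              fderiv ℝ (fun l => τ l (head b)) lam (Pi.single a 1) = 0
            rw [hhd, hd0]; simp
          rw [hFb]
          refine Finset.sum_eq_zero fun j _ => ?_
          rw [if_neg]
          rintro ⟨-, hj⟩
          exact j.2 (hj ▸ hhd)
        · have : ∀ j : {i : N // i ≠ d},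
              (if tail b = i.1 ∧ head b = j.1 then F b else 0)
              = if j = ⟨head b, hhd⟩ then F b else 0 := by
            intro j
            refine if_congr ?_ rfl rfl
            constructor
            · rintro ⟨-, hj⟩; exact Subtype.ext hj.symm
            · rintro rfl; exact ⟨htb, rfl⟩
          rw [Finset.sum_congr rfl fun j _ => this j]
          simp
      · have hFb : F b = 0 := by
          show Dphi i.1 z b *
            fderiv ℝ (fun l => τ l (head b)) lam (Pi.single a 1) = 0
          rw [hDzero i.1 i.2 b htb, zero_mul]
        rw [hFb]
        refine Finset.sum_eq_zero fun j _ => ?_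
        rw [if_neg]; rintro ⟨h, -⟩; exact htb h
    calc ∑ j, Phat i j * J j a
        = ∑ j : {i : N // i ≠ d}, ∑ b, if tail b = i.1 ∧ head b = j.1 then F b else 0 :=
          Finset.sum_congr rfl fun j _ => h1 j
      _ = ∑ b, ∑ j : {i : N // i ≠ d},
            if tail b = i.1 ∧ head b = j.1 then F b else 0 := Finset.sum_comm
      _ = ∑ b, F b := Finset.sum_congr rfl fun b _ => h2 b
  -- matrix identity
  have hmat : (1 - Phat) * J = Qhat := by
    ext i a
    rw [Matrix.sub_mul, Matrix.one_mul, Matrix.sub_apply, Matrix.mul_apply, hFsum i a,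
      hQhat, Matrix.of_apply, hmain i a]
    ring
  have hdet : IsUnit (1 - Phat).det := (Matrix.isUnit_iff_isUnit_det _).mp hinv
  have hJeq : J = (1 - Phat)⁻¹ * Qhat := by
    rw [← hmat, ← Matrix.mul_assoc, Matrix.nonsing_inv_mul _ hdet, Matrix.one_mul]
  intro i a
  have := congrFun (congrFun hJeq i) a
  rw [hJ, Matrix.of_apply] at this
  exact this
end

section
/- Let n ≥ 1 and let φ : ℝⁿ → ℝ be componentwise nondecreasing and such that for every index i the following limit property holds: for every x ∈ ℝⁿ and every ε > 0 there exists M such that |φ(y) − x_i| < ε whenever y_i = x_i and y_j ≥ M for all j ≠ i. Then φ(x) ≤ min_{1≤i≤n} x_i for every x ∈ ℝⁿ. -/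
/-- a componentwise nondecreasing map `φ : ℝⁿ → ℝ` satisfying the
limit property `φ(y) → x_i` as `y_j → ∞` for `j ≠ i` with `y_i = x_i` fixed,
satisfies `φ(x) ≤ min_i x_i` for every `x`. -/
theorem stmt12 (n : ℕ) (hn : 1 ≤ n) (phi : (Fin n → ℝ) → ℝ)
    (hmono : ∀ x y : Fin n → ℝ, (∀ j, x j ≤ y j) → phi x ≤ phi y)
    (hlim : ∀ (i : Fin n) (x : Fin n → ℝ), ∀ ε > (0:ℝ), ∃ M : ℝ,
      ∀ y : Fin n → ℝ, y i = x i → (∀ j, j ≠ i → M ≤ y j) → |phi y - x i| < ε) :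
    ∀ (x : Fin n → ℝ) (i : Fin n), phi x ≤ x i := by
  intro x i
  by_contra h
  push_neg at h
  set ε := phi x - x i with hε
  have hεpos : 0 < ε := by simp [hε]; linarith
  obtain ⟨M, hM⟩ := hlim i x ε hεpos
  set y : Fin n → ℝ := fun j => if j = i then x i else max (x j) M with hy
  have hyi : y i = x i := by simp [hy]
  have hyM : ∀ j, j ≠ i → M ≤ y j := by
    intro j hj; simp [hy, hj, le_max_right]
  have hxy : ∀ j, x j ≤ y j := by
    intro j
    by_cases hj : j = i
    · subst hj; simp [hy]
    · simp [hy, hj, le_max_left]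
  have h1 := hmono x y hxy
  have h2 := hM y hyi hyM
  rw [abs_lt] at h2
  linarith
end

section
/- Let P ⊆ ℝ^A be an open convex set with A a nonempty finite set, let λ⁰ ∈ ℝ^A, and for each a ∈ A let g_a : ℝ → ℝ be continuous and strictly increasing. Let K be a finite set and for each k ∈ K let F_k : ℝ → ℝ be concave and nondecreasing and q^k : P → ℝ be concave. Then the function Φ(λ) = Σ_{a∈A} ∫_{λ_a⁰}^{λ_a} g_a(z) dz − Σ_{k∈K} F_k(q^k(λ)) is strictly convex on P. -/
open intervalIntegral

lemma stmt13_prim_strictConvex (lam0 : ℝ) (g : ℝ → ℝ) (hgc : Continuous g)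
    (hgm : StrictMono g) :
    StrictConvexOn ℝ Set.univ (fun t => ∫ z in lam0..t, g z) := by
  have hcont : Continuous (fun t => ∫ z in lam0..t, g z) :=
    intervalIntegral.continuous_primitive (fun a b => hgc.intervalIntegrable a b) lam0
  refine StrictMono.strictConvexOn_univ_of_deriv hcont ?_
  have : deriv (fun t => ∫ z in lam0..t, g z) = g := by
    funext t; exact Continuous.deriv_integral g hgc lam0 t
  rw [this]; exact hgm

/-- with `g_a` continuous strictly increasing, `F_k` concave
nondecreasing and `q^k` concave on the open convex set `P`, the function
`Φ(λ) = Σ_a ∫_{λ⁰_a}^{λ_a} g_a(z) dz − Σ_k F_k(q^k(λ))` is strictly convex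
on `P`. -/
theorem stmt13 {A : Type} [Fintype A] [Nonempty A]
    {K : Type} [Fintype K]
    (P : Set (A → ℝ)) (hPopen : IsOpen P) (hPconv : Convex ℝ P)
    (lam0 : A → ℝ)
    (g : A → ℝ → ℝ)
    (hgc : ∀ a, Continuous (g a)) (hgm : ∀ a, StrictMono (g a))
    (F : K → ℝ → ℝ)
    (hFconc : ∀ k, ConcaveOn ℝ Set.univ (F k)) (hFmono : ∀ k, Monotone (F k))
    (q : K → (A → ℝ) → ℝ) (hq : ∀ k, ConcaveOn ℝ P (q k)) :
    StrictConvexOn ℝ P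
      (fun lam => (∑ a, ∫ z in lam0 a..lam a, g a z) - ∑ k, F k (q k lam)) := by
  have hprim : ∀ a : A, StrictConvexOn ℝ Set.univ (fun t => ∫ z in lam0 a..t, g a z) :=
    fun a => stmt13_prim_strictConvex (lam0 a) (g a) (hgc a) (hgm a)
  -- strict convexity of the sum of primitives
  have hS : StrictConvexOn ℝ P (fun lam : A → ℝ => ∑ a, ∫ z in lam0 a..lam a, g a z) := by
    refine ⟨hPconv, fun x hx y hy hxy c d hc hd hcd => ?_⟩
    have hne : ∃ a, x a ≠ y a := by
      by_contra h
      push_neg at h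
      exact hxy (funext h)
    obtain ⟨a₀, ha₀⟩ := hne
    have key : ∀ a : A,
        (∫ z in lam0 a..((c • x + d • y) a), g a z) ≤
          c * (∫ z in lam0 a..x a, g a z) + d * (∫ z in lam0 a..y a, g a z) := by
      intro a
      have := (hprim a).convexOn.2 (Set.mem_univ (x a)) (Set.mem_univ (y a))
        hc.le hd.le hcd
      simpa [smul_eq_mul] using this
    have keystrict :
        (∫ z in lam0 a₀..((c • x + d • y) a₀), g a₀ z) <
          c * (∫ z in lam0 a₀..x a₀, g a₀ z) + d * (∫ z in lam0 a₀..y a₀, g a₀ z) := by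
      have := (hprim a₀).2 (Set.mem_univ (x a₀)) (Set.mem_univ (y a₀)) ha₀ hc hd hcd
      simpa [smul_eq_mul] using this
    calc (∑ a, ∫ z in lam0 a..((c • x + d • y) a), g a z)
        < ∑ a, (c * (∫ z in lam0 a..x a, g a z) + d * (∫ z in lam0 a..y a, g a z)) := by
          exact Finset.sum_lt_sum (fun a _ => key a) ⟨a₀, Finset.mem_univ a₀, keystrict⟩
      _ = c • (∑ a, ∫ z in lam0 a..x a, g a z) + d • (∑ a, ∫ z in lam0 a..y a, g a z) := by
          rw [Finset.sum_add_distrib, ← Finset.mul_sum, ← Finset.mul_sum]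
          simp [smul_eq_mul]
  -- concavity of each F k ∘ q k
  have hT : ∀ k, ConcaveOn ℝ P (fun lam => F k (q k lam)) := by
    intro k
    refine ⟨hPconv, fun x hx y hy c d hc hd hcd => ?_⟩
    calc c • F k (q k x) + d • F k (q k y)
        ≤ F k (c • q k x + d • q k y) :=
          (hFconc k).2 (Set.mem_univ _) (Set.mem_univ _) hc hd hcd
      _ ≤ F k (q k (c • x + d • y)) :=
          hFmono k ((hq k).2 hx hy hc hd hcd)
  have hTsum : ConcaveOn ℝ P (fun lam => ∑ k, F k (q k lam)) := by
    have := Finset.sum_induction _ (ConcaveOn ℝ P)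
      (fun f g hf hg => hf.add hg) (concaveOn_const 0 hPconv)
      (fun k _ => hT k) (s := Finset.univ)
    convert this using 1
    on_goal 1 => rfl
    funext lam
    simp
  have := hS.add_convexOn hTsum.neg
  exact this
end

section
/- For each k ∈ K, suppose τ^k : U → ℝ^N is differentiable and solves, at every λ ∈ U, the dynamic programming system for destination d_k with maps φ_i^k, and that I − P̂^k(z^k(λ)) is invertible, where z^k(λ)_a = λ_a + τ^k_{j_a}(λ). Let τ_k⁰ ∈ ℝ be constants, q^k(λ) = τ^k_{s_k}(λ) − τ_k⁰, and assume q^k(λ) > 0 on U. Set x̃^k(λ) = f_k(q^k(λ)), y^k(λ) = (I − P̂^k(z^k(λ))ᵀ)^{-1} δ^k x̃^k(λ) with δ^k the indicator vector of s_k, v^k_a(λ) = y^k_{i_a}(λ) · ∂φ_{i_a}^k/∂z_a(z^k(λ)), and w̃_a(λ) = Σ_{k∈K} v^k_a(λ). Then the function Φ(λ) = Σ_{a∈A} ∫_{λ_a⁰}^{λ_a} s_a^{-1}(z) dz − Σ_{k∈K} F_k(q^k(λ)) is differentiable on U with ∂Φ/∂λ_a(λ) = s_a^{-1}(λ_a)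 − w̃_a(λ) for every arc a; consequently, λ* ∈ U satisfies ∇Φ(λ*) = 0 if and only if s_a^{-1}(λ*_a) = w̃_a(λ*) for every arc a, i.e. λ*_a = s_a(w̃_a(λ*)). -/
open intervalIntegral in
private lemma ftc_aux {l0 : ℝ} {g : ℝ → ℝ} (hg : ContinuousOn g (Set.Ici l0)) {x : ℝ} (hx : l0 < x) :
    HasDerivAt (fun y => ∫ z in l0..y, g z) (g x) x := by
  have hmem : Set.Ici l0 ∈ nhds x := Ici_mem_nhds hx
  have hca : ContinuousAt g x := hg.continuousAt hmem
  apply intervalIntegral.integral_hasDerivAt_right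
  · apply (hg.mono _).intervalIntegrable
    rw [Set.uIcc_of_le hx.le]
    exact fun y hy => hy.1
  · exact ContinuousOn.stronglyMeasurableAtFilter isOpen_Ioi (hg.mono Set.Ioi_subset_Ici_self) x hx
  · exact hca


open Filter intervalIntegral

/-- gradient of the objective
`Φ(λ) = Σ_a ∫_{λ⁰_a}^{λ_a} s_a⁻¹(z) dz − Σ_k F_k(q^k(λ))` of (D-MNUM):
`∂Φ/∂λ_a(λ) = s_a⁻¹(λ_a) − w̃_a(λ)`, so that `∇Φ(λ*) = 0` iff
`s_a⁻¹(λ*_a) = w̃_a(λ*)` for every arc `a`. -/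
theorem stmt14 {N A K : Type} [Fintype N] [Fintype A] [Fintype K]
    [DecidableEq N] [DecidableEq A]
    (tail head : A → N) (src dst : K → N)
    (phi : K → N → (A → ℝ) → ℝ) (Dphi : K → N → (A → ℝ) → A → ℝ)
    (hdep : ∀ k i, i ≠ dst k → ∀ z z' : A → ℝ,
      (∀ a, tail a = i → z a = z' a) → phi k i z = phi k i z')
    (hconc : ∀ k i, i ≠ dst k → ConcaveOn ℝ Set.univ (phi k i))
    (hmono : ∀ k i, i ≠ dst k → Monotone (phi k i))
    -- φ_i^k continuously differentiable, with partial derivatives `Dphi k i`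
    (hderiv : ∀ k i, i ≠ dst k → ∀ z : A → ℝ,
      HasFDerivAt (phi k i)
        (∑ a, Dphi k i z a • (ContinuousLinearMap.proj a : (A → ℝ) →L[ℝ] ℝ)) z)
    (hDcont : ∀ k i, i ≠ dst k → Continuous (fun z : A → ℝ => Dphi k i z))
    (hDnn : ∀ k i, i ≠ dst k → ∀ z a, 0 ≤ Dphi k i z a)
    (hDzero : ∀ k i, i ≠ dst k → ∀ (z : A → ℝ) a, tail a ≠ i → Dphi k i z a = 0)
    (hDsum : ∀ k i, i ≠ dst k → ∀ z : A → ℝ,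
      ∑ a ∈ Finset.univ.filter (fun a => tail a = i), Dphi k i z a = 1)
    -- link latency functions s_a : [0, c_a) → [λ⁰_a, ∞), with inverses s_a⁻¹
    (lam0 : A → ℝ) (hlam0 : ∀ a, 0 ≤ lam0 a)
    (c : A → EReal) (hc : ∀ a, 0 < c a)
    (s : A → ℝ → ℝ) (sInv : A → ℝ → ℝ)
    (hsmono : ∀ a, StrictMonoOn (s a) {w : ℝ | 0 ≤ w ∧ (w : EReal) < c a})
    (hs0 : ∀ a, s a 0 = lam0 a)
    (hssurj : ∀ a, s a '' {w : ℝ | 0 ≤ w ∧ (w : EReal) < c a} = Set.Ici (lam0 a))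
    (hsInv : ∀ a, ∀ w : ℝ, 0 ≤ w → (w : EReal) < c a → sInv a (s a w) = w)
    (hsInv' : ∀ a, ∀ y : ℝ, lam0 a ≤ y →
      s a (sInv a y) = y ∧ 0 ≤ sInv a y ∧ (sInv a y : EReal) < c a)
    (hsInvc : ∀ a, ContinuousOn (sInv a) (Set.Ici (lam0 a)))
    -- rate functions f_k and their primitives F_k
    (f : K → ℝ → ℝ)
    (hfpos : ∀ k, ∀ q : ℝ, 0 < q → 0 < f k q)
    (hfc : ∀ k, ContinuousOn (f k) (Set.Ioi 0))
    (hfm : ∀ k, StrictAntiOn (f k) (Set.Ioi 0))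
    (F : K → ℝ → ℝ)
    (hF : ∀ k, ∀ q : ℝ, 0 < q → HasDerivAt (F k) (f k q) q)
    -- the open domain U
    (U : Set (A → ℝ)) (hU : IsOpen U)
    (hUsub : U ⊆ {lam : A → ℝ | ∀ a, lam0 a < lam a})
    -- τ^k solves the dynamic programming system on U and is differentiable
    (τ : K → (A → ℝ) → N → ℝ)
    (hτdiff : ∀ k, ∀ lam ∈ U, ∀ i, DifferentiableAt ℝ (fun l => τ k l i) lam)
    (hτd : ∀ k, ∀ lam ∈ U, τ k lam (dst k) = 0)
    (hτeq : ∀ k, ∀ lam ∈ U, ∀ i, i ≠ dst k →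
      τ k lam i = phi k i (fun a => lam a + τ k lam (head a)))
    -- invertibility of I − P̂^k(z^k(λ)) on U
    (hinv : ∀ k, ∀ lam ∈ U,
      IsUnit ((1 : Matrix {i : N // i ≠ dst k} {i : N // i ≠ dst k} ℝ) -
        Matrix.of (fun i j : {i : N // i ≠ dst k} =>
          ∑ a ∈ Finset.univ.filter (fun a => tail a = i.1 ∧ head a = j.1),
            Dphi k i.1 (fun b => lam b + τ k lam (head b)) a)))
    -- queuing delays are positive on U
    (τ0 : K → ℝ)
    (hqpos : ∀ k, ∀ lam ∈ U, 0 < τ k lam (src k) - τ0 k) :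
    -- definitions of z^k, q^k, x̃^k, P̂^k, y^k, v^k, w̃ and Φ
    let zf : K → (A → ℝ) → A → ℝ := fun k lam a => lam a + τ k lam (head a)
    let qk : K → (A → ℝ) → ℝ := fun k lam => τ k lam (src k) - τ0 k
    let xt : K → (A → ℝ) → ℝ := fun k lam => f k (qk k lam)
    let Phat : (k : K) → (A → ℝ) →
        Matrix {i : N // i ≠ dst k} {i : N // i ≠ dst k} ℝ := fun k lam =>
      Matrix.of fun i j =>
        ∑ a ∈ Finset.univ.filter (fun a => tail a = i.1 ∧ head a = j.1),
          Dphi k i.1 (zf k lam) a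
    let y : (k : K) → (A → ℝ) → {i : N // i ≠ dst k} → ℝ := fun k lam =>
      ((1 - (Phat k lam).transpose)⁻¹).mulVec
        (fun i => if i.1 = src k then xt k lam else 0)
    let v : K → (A → ℝ) → A → ℝ := fun k lam a =>
      if h : tail a ≠ dst k then
        y k lam ⟨tail a, h⟩ * Dphi k (tail a) (zf k lam) a
      else 0
    let wt : (A → ℝ) → A → ℝ := fun lam a => ∑ k, v k lam a
    let Φ : (A → ℝ) → ℝ := fun lam =>
      (∑ a, ∫ z in lam0 a..lam a, sInv a z) - ∑ k, F k (qk k lam)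
    -- conclusion: Φ is differentiable with ∂Φ/∂λ_a = s_a⁻¹(λ_a) − w̃_a(λ),
    -- and its critical points are exactly the solutions of (R-MNUM)
    (∀ lam ∈ U, HasFDerivAt Φ
        (∑ a, (sInv a (lam a) - wt lam a) •
          (ContinuousLinearMap.proj a : (A → ℝ) →L[ℝ] ℝ)) lam) ∧
    (∀ lam ∈ U, (fderiv ℝ Φ lam = 0 ↔ ∀ a, sInv a (lam a) = wt lam a)) := by
  intro zf qk xt Phat y v wt Φ
  have main : ∀ lam ∈ U, HasFDerivAt Φ
      (∑ a, (sInv a (lam a) - wt lam a) •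
        (ContinuousLinearMap.proj a : (A → ℝ) →L[ℝ] ℝ)) lam := by
    intro lam hlam
    -- Part 1 : integral terms
    have h1 : ∀ a : A, HasFDerivAt (fun l : A → ℝ => ∫ z in lam0 a..l a, sInv a z)
        ((sInv a (lam a)) • (ContinuousLinearMap.proj a : (A → ℝ) →L[ℝ] ℝ)) lam := by
      intro a
      have hd : HasDerivAt (fun x => ∫ z in lam0 a..x, sInv a z) (sInv a (lam a)) (lam a) :=
        ftc_aux (hsInvc a) (hUsub hlam a)
      exact hd.comp_hasFDerivAt lam ((ContinuousLinearMap.proj a :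
        (A → ℝ) →L[ℝ] ℝ).hasFDerivAt)
    -- Part 2 : the terms F k (qk k ·)
    have h2 : ∀ k : K, HasFDerivAt (fun l => F k (qk k l))
        (∑ a, (v k lam a) • (ContinuousLinearMap.proj a : (A → ℝ) →L[ℝ] ℝ)) lam := by
      intro k
      set z : A → ℝ := zf k lam with hz
      set L : N → (A → ℝ) →L[ℝ] ℝ := fun i => fderiv ℝ (fun l => τ k l i) lam with hL
      have hLd : L (dst k) = 0 := by
        have hev : (fun l => τ k l (dst k)) =ᶠ[nhds lam] (fun _ => (0:ℝ)) :=
          Filter.eventually_of_mem (hU.mem_nhds hlam) (fun l hl => hτd k l hl)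
        show fderiv ℝ (fun l => τ k l (dst k)) lam = 0
        rw [hev.fderiv_eq]
        exact fderiv_const_apply 0
      have hzdiff : HasFDerivAt (zf k)
          (ContinuousLinearMap.pi fun a => (ContinuousLinearMap.proj a :
            (A → ℝ) →L[ℝ] ℝ) + L (head a)) lam := by
        apply hasFDerivAt_pi''
        intro a
        rw [ContinuousLinearMap.proj_pi]
        exact ((ContinuousLinearMap.proj a : (A → ℝ) →L[ℝ] ℝ).hasFDerivAt).add
          (hτdiff k lam hlam (head a)).hasFDerivAt
      have hLi : ∀ (i : N), i ≠ dst k → ∀ u : A → ℝ,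
          L i u = ∑ a, Dphi k i z a * (u a + L (head a) u) := by
        intro i hi u
        have hev : (fun l => τ k l i) =ᶠ[nhds lam] (fun l => phi k i (zf k l)) :=
          Filter.eventually_of_mem (hU.mem_nhds hlam) (fun l hl => hτeq k l hl i hi)
        have hcomp : HasFDerivAt (fun l => phi k i (zf k l))
            ((∑ a, Dphi k i z a • (ContinuousLinearMap.proj a : (A → ℝ) →L[ℝ] ℝ)).comp
              (ContinuousLinearMap.pi fun a => (ContinuousLinearMap.proj a :
                (A → ℝ) →L[ℝ] ℝ) + L (head a))) lam :=
          (hderiv k i hi z).comp lam hzdiff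
        have hLe : L i = (∑ a, Dphi k i z a • (ContinuousLinearMap.proj a :
            (A → ℝ) →L[ℝ] ℝ)).comp
              (ContinuousLinearMap.pi fun a => (ContinuousLinearMap.proj a :
                (A → ℝ) →L[ℝ] ℝ) + L (head a)) := by
          show fderiv ℝ (fun l => τ k l i) lam = _
          rw [hev.fderiv_eq]
          exact hcomp.fderiv
        rw [hLe]
        simp [ContinuousLinearMap.sum_apply, ContinuousLinearMap.proj_pi, smul_eq_mul]
      -- the key pointwise identity
      have key : ∀ u : A → ℝ, f k (qk k lam) * L (src k) u = ∑ a, v k lam a * u a := by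
        intro u
        set t : {i : N // i ≠ dst k} → ℝ := fun i => L i.1 u with hts
        set g : {i : N // i ≠ dst k} → ℝ := fun i => ∑ a, Dphi k i.1 z a * u a with hgs
        have hsplit : ∀ i : {i : N // i ≠ dst k}, ∑ a, Dphi k i.1 z a * L (head a) u
            = ∑ j : {i : N // i ≠ dst k}, Phat k lam i j * t j := by
          intro i
          have e1 : ∑ a, Dphi k i.1 z a * L (head a) u
              = ∑ j : N, ∑ a ∈ Finset.univ.filter (fun a => head a = j),
                  Dphi k i.1 z a * L (head a) u :=
            (Finset.sum_fiberwise_of_maps_to (fun a _ => Finset.mem_univ (head a)) _).symm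
          have e2 : ∀ j : N, ∑ a ∈ Finset.univ.filter (fun a => head a = j),
              Dphi k i.1 z a * L (head a) u
              = (∑ a ∈ Finset.univ.filter (fun a => tail a = i.1 ∧ head a = j),
                  Dphi k i.1 z a) * L j u := by
            intro j
            have hc : ∀ a ∈ Finset.univ.filter (fun a => head a = j),
                Dphi k i.1 z a * L (head a) u = Dphi k i.1 z a * L j u := by
              intro a ha
              rw [(Finset.mem_filter.mp ha).2]
            rw [Finset.sum_congr rfl hc, ← Finset.sum_mul]
            congr 1
            have hfe : Finset.univ.filter (fun a => tail a = i.1 ∧ head a = j)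
                = (Finset.univ.filter (fun a => head a = j)).filter
                    (fun a => tail a = i.1) := by
              rw [Finset.filter_filter]
              apply Finset.filter_congr
              intro a _
              simp [and_comm]
            rw [hfe]
            exact (Finset.sum_filter_of_ne (fun a _ hne => by
              by_contra hti
              exact hne (hDzero k i.1 i.2 z a hti))).symm
          rw [e1, Finset.sum_congr rfl (fun j _ => e2 j)]
          have e3 : ∑ j : N, (∑ a ∈ Finset.univ.filter
                (fun a => tail a = i.1 ∧ head a = j), Dphi k i.1 z a) * L j u
              = ∑ j ∈ Finset.univ.filter (fun j => j ≠ dst k),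
                  (∑ a ∈ Finset.univ.filter (fun a => tail a = i.1 ∧ head a = j),
                    Dphi k i.1 z a) * L j u := by
            refine (Finset.sum_filter_of_ne (fun j _ hne => ?_)).symm
            by_contra hj
            rw [hj, hLd] at hne
            simp at hne
          rw [e3, Finset.sum_subtype (p := fun j => j ≠ dst k) _ (by simp)
            (fun j => (∑ a ∈ Finset.univ.filter
              (fun a => tail a = i.1 ∧ head a = j), Dphi k i.1 z a) * L j u)]
          rfl
        have hsys : (1 - Phat k lam).mulVec t = g := by
          funext i
          have hrow : ((1 - Phat k lam).mulVec t) i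
              = t i - ∑ j : {i : N // i ≠ dst k}, Phat k lam i j * t j := by
            simp [Matrix.mulVec, dotProduct, Matrix.sub_apply, Matrix.one_apply,
              sub_mul, ite_mul, Finset.sum_sub_distrib, Finset.sum_ite_eq]
          rw [hrow, ← hsplit i]
          have : t i = g i + ∑ a, Dphi k i.1 z a * L (head a) u := by
            show L i.1 u = _
            rw [hLi i.1 i.2 u, hgs]
            simp [mul_add, Finset.sum_add_distrib]
          rw [this]
          ring
        have hunit : IsUnit (1 - Phat k lam) := hinv k lam hlam
        have ht : t = ((1 - Phat k lam)⁻¹).mulVec g := by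
          rw [← hsys, Matrix.mulVec_mulVec,
            Matrix.nonsing_inv_mul _ ((Matrix.isUnit_iff_isUnit_det _).mp hunit),
            Matrix.one_mulVec]
        set δ : {i : N // i ≠ dst k} → ℝ :=
          fun i => if i.1 = src k then xt k lam else 0 with hδ
        have hyδ : y k lam = Matrix.vecMul δ ((1 - Phat k lam)⁻¹) := by
          show ((1 - (Phat k lam).transpose)⁻¹).mulVec δ = _
          rw [show (1 : Matrix {i : N // i ≠ dst k} {i : N // i ≠ dst k} ℝ)
              - (Phat k lam).transpose = (1 - Phat k lam).transpose by
            rw [Matrix.transpose_sub, Matrix.transpose_one],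
            ← Matrix.transpose_nonsing_inv, Matrix.mulVec_transpose]
        have hyg : ∑ i : {i : N // i ≠ dst k}, y k lam i * g i
            = ∑ i : {i : N // i ≠ dst k}, δ i * t i := by
          have : dotProduct (y k lam) g = dotProduct δ t := by
            rw [hyδ, ← Matrix.dotProduct_mulVec, ← ht]
          exact this
        have hlhs : f k (qk k lam) * L (src k) u
            = ∑ i : {i : N // i ≠ dst k}, δ i * t i := by
          by_cases hsd : src k = dst k
          · have h0 : ∀ i : {i : N // i ≠ dst k}, δ i * t i = 0 := by
              intro i
              have : i.1 ≠ src k := by rw [hsd]; exact i.2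
              simp [hδ, this]
            rw [Finset.sum_congr rfl (fun i _ => h0 i), Finset.sum_const_zero]
            rw [hsd]
            show f k (qk k lam) * (L (dst k)) u = 0
            rw [hLd]
            simp
          · rw [Finset.sum_eq_single ⟨src k, hsd⟩ (fun i _ hne => by
              have : i.1 ≠ src k := fun h => hne (Subtype.ext h)
              simp [hδ, this]) (fun h => absurd (Finset.mem_univ _) h)]
            simp [hδ]
            rfl
        have hrhs : ∑ i : {i : N // i ≠ dst k}, y k lam i * g i
            = ∑ a, v k lam a * u a := by
          have e4 : ∀ a : A, (∑ i : {i : N // i ≠ dst k}, y k lam i * Dphi k i.1 z a)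
              = v k lam a := by
            intro a
            by_cases hta : tail a ≠ dst k
            · rw [Finset.sum_eq_single ⟨tail a, hta⟩ (fun i _ hne => by
                have hne' : tail a ≠ i.1 := fun h => hne (Subtype.ext h.symm)
                rw [hDzero k i.1 i.2 z a hne', mul_zero])
                (fun h => absurd (Finset.mem_univ _) h)]
              show _ = v k lam a
              simp only [v, hta, dif_pos, ne_eq, not_false_eq_true]
              rfl
            · push_neg at hta
              have h0 : ∀ i : {i : N // i ≠ dst k}, y k lam i * Dphi k i.1 z a = 0 := by
                intro i
                have : tail a ≠ i.1 := by rw [hta]; exact fun h => i.2 h.symm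
                rw [hDzero k i.1 i.2 z a this, mul_zero]
              rw [Finset.sum_congr rfl (fun i _ => h0 i), Finset.sum_const_zero]
              show (0:ℝ) = v k lam a
              simp only [v, hta]
              simp
          calc ∑ i : {i : N // i ≠ dst k}, y k lam i * g i
              = ∑ i : {i : N // i ≠ dst k}, ∑ a, y k lam i * (Dphi k i.1 z a * u a) := by
                refine Finset.sum_congr rfl (fun i _ => ?_)
                rw [hgs, Finset.mul_sum]
            _ = ∑ a, ∑ i : {i : N // i ≠ dst k}, y k lam i * (Dphi k i.1 z a * u a) :=
                Finset.sum_comm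
            _ = ∑ a, v k lam a * u a := by
                refine Finset.sum_congr rfl (fun a _ => ?_)
                rw [← e4 a, Finset.sum_mul]
                exact Finset.sum_congr rfl (fun i _ => by ring)
        rw [hlhs, ← hyg, hrhs]
      -- assemble h2
      have hq : HasFDerivAt (qk k) (L (src k)) lam := by
        show HasFDerivAt (fun l => τ k l (src k) - τ0 k) (L (src k)) lam
        exact ((hτdiff k lam hlam (src k)).hasFDerivAt).sub_const (τ0 k)
      have hFd : HasFDerivAt (fun l => F k (qk k l))
          (f k (qk k lam) • L (src k)) lam :=
        (hF k (qk k lam) (hqpos k lam hlam)).comp_hasFDerivAt lam hq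
      have hEq : (∑ a, v k lam a • (ContinuousLinearMap.proj a : (A → ℝ) →L[ℝ] ℝ))
          = f k (qk k lam) • L (src k) := by
        apply ContinuousLinearMap.ext
        intro u
        simp only [ContinuousLinearMap.sum_apply, ContinuousLinearMap.smul_apply,
          ContinuousLinearMap.proj_apply, smul_eq_mul]
        exact (key u).symm
      rw [hEq]
      exact hFd
    -- assemble
    have hcomb := (HasFDerivAt.sum (fun a (_ : a ∈ Finset.univ) => h1 a)).sub
      (HasFDerivAt.sum (fun k (_ : k ∈ Finset.univ) => h2 k))
    have hCL : (∑ a, (sInv a (lam a) - wt lam a) •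
          (ContinuousLinearMap.proj a : (A → ℝ) →L[ℝ] ℝ))
        = (∑ a, (sInv a (lam a)) • (ContinuousLinearMap.proj a : (A → ℝ) →L[ℝ] ℝ))
          - ∑ k, ∑ a, (v k lam a) • (ContinuousLinearMap.proj a : (A → ℝ) →L[ℝ] ℝ) := by
      apply ContinuousLinearMap.ext
      intro u
      simp only [ContinuousLinearMap.sum_apply, ContinuousLinearMap.sub_apply,
        ContinuousLinearMap.smul_apply, ContinuousLinearMap.proj_apply, smul_eq_mul,
        sub_mul, Finset.sum_sub_distrib]
      congr 1
      calc ∑ a, wt lam a * u a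
          = ∑ a, ∑ k, v k lam a * u a := Finset.sum_congr rfl (fun a _ => by
            show (∑ k, v k lam a) * u a = _
            rw [Finset.sum_mul])
        _ = ∑ k, ∑ a, v k lam a * u a := Finset.sum_comm
    rw [hCL]
    exact hcomb.congr_of_eventuallyEq (Filter.Eventually.of_forall fun l => by
      simp only [Φ, Pi.sub_apply, Finset.sum_apply])
  refine ⟨main, fun lam hlam => ?_⟩
  rw [(main lam hlam).fderiv]
  constructor
  · intro h0 a
    have h1 := congrFun (congrArg DFunLike.coe h0) (Pi.single a 1)
    simp only [ContinuousLinearMap.sum_apply, ContinuousLinearMap.smul_apply,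
      ContinuousLinearMap.proj_apply, smul_eq_mul, ContinuousLinearMap.zero_apply] at h1
    rw [Finset.sum_eq_single a (fun b _ hb => by
      rw [Pi.single_eq_of_ne hb, mul_zero]) (fun h => absurd (Finset.mem_univ _) h)] at h1
    rw [Pi.single_eq_same, mul_one] at h1
    linarith
  · intro h
    have h0 : ∀ a, sInv a (lam a) - wt lam a = 0 := fun a => sub_eq_zero.mpr (h a)
    simp [h0]
end

section
/- Let A and K be nonempty finite sets and λ⁰ ∈ ℝ^A. For each a ∈ A let g_a : ℝ → [0, ∞) be nondecreasing with g_a(z) = 0 for all z ≤ λ_a⁰. For each k ∈ K let F_k : ℝ → ℝ be nondecreasing and q^k : ℝ^A → ℝ be componentwise nondecreasing. Define Φ(λ) = Σ_{a∈A} ∫_{λ_a⁰}^{λ_a} g_a(z) dz − Σ_{k∈K} F_k(q^k(λ)). Then Φ(λ ∨ λ⁰) ≤ Φ(λ) for every λ ∈ ℝ^A, where (λ ∨ λ⁰)_a = max(λ_a, λ_a⁰). -/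
open intervalIntegral

/-- with `g_a ≥ 0` nondecreasing and vanishing below `λ⁰_a`, `F_k`
nondecreasing and `q^k` componentwise nondecreasing, the function
`Φ(λ) = Σ_a ∫_{λ⁰_a}^{λ_a} g_a(z) dz − Σ_k F_k(q^k(λ))` satisfies
`Φ(λ ∨ λ⁰) ≤ Φ(λ)` for every `λ`. -/
theorem stmt17 {A : Type} [Fintype A] [Nonempty A]
    {K : Type} [Fintype K] [Nonempty K]
    (lam0 : A → ℝ)
    (g : A → ℝ → ℝ)
    (hgnn : ∀ a z, 0 ≤ g a z)
    (hgm : ∀ a, Monotone (g a))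
    (hg0 : ∀ a z, z ≤ lam0 a → g a z = 0)
    (F : K → ℝ → ℝ) (hF : ∀ k, Monotone (F k))
    (q : K → (A → ℝ) → ℝ) (hq : ∀ k, Monotone (q k)) :
    ∀ lam : A → ℝ,
      ((∑ a, ∫ z in lam0 a..(max (lam a) (lam0 a)), g a z) -
          ∑ k, F k (q k (fun a => max (lam a) (lam0 a)))) ≤
        (∑ a, ∫ z in lam0 a..lam a, g a z) - ∑ k, F k (q k lam) := by
  intro lam
  have hint : (∑ a, ∫ z in lam0 a..(max (lam a) (lam0 a)), g a z)
      = ∑ a, ∫ z in lam0 a..lam a, g a z := by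
    refine Finset.sum_congr rfl fun a _ => ?_
    rcases le_or_gt (lam0 a) (lam a) with h | h
    · rw [max_eq_left h]
    · rw [max_eq_right h.le, intervalIntegral.integral_same]
      symm
      have : (∫ z in lam0 a..lam a, g a z) = ∫ z in lam0 a..lam a, (0:ℝ) := by
        apply intervalIntegral.integral_congr
        intro z hz
        rw [Set.uIcc_of_ge h.le] at hz
        exact hg0 a z hz.2
      rw [this, intervalIntegral.integral_zero]
  rw [hint]
  have hFle : (∑ k, F k (q k lam)) ≤ ∑ k, F k (q k (fun a => max (lam a) (lam0 a))) := by
    refine Finset.sum_le_sum fun k _ => (hF k) ((hq k) ?_)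
    intro a
    exact le_max_left _ _
  linarith
end

section
/- A vector x* with x*^k ∈ I_k for every k satisfies the equilibrium equations f_k^{-1}(x*^k) = Σ_{a∈A_k} ψ_a(Σ_{s∈K : a∈A_s} x*^s) for every source k ∈ K if and only if x* is a global minimizer over the open set Π_{k∈K} I_k of the function J(x) = Σ_{a∈A} Ψ_a(Σ_{s∈K : a∈A_s} x^s) − Σ_{k∈K} U_k(x^k); moreover J is strictly convex on Π_{k∈K} I_k, so such a minimizer is unique. -/
open Filter intervalIntegral

section AuxLemmas

open Set MeasureTheory

/-- Supporting line inequality for a primitive of a monotone continuous function. -/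
lemma prim_support {g : ℝ → ℝ} (hgc : Continuous g) (hgm : Monotone g) (w w' : ℝ) :
    g w * (w' - w) ≤ (∫ z in (0:ℝ)..w', g z) - ∫ z in (0:ℝ)..w, g z := by
  have hint : ∀ a b : ℝ, IntervalIntegrable g volume a b :=
    fun a b => hgc.intervalIntegrable a b
  rw [intervalIntegral.integral_interval_sub_left (hint 0 w') (hint 0 w)]
  rcases le_total w w' with h | h
  · have h1 : (∫ z in w..w', g w) ≤ ∫ z in w..w', g z :=
      intervalIntegral.integral_mono_on h (intervalIntegrable_const) (hint w w')
        (fun z hz => hgm hz.1)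
    simpa [smul_eq_mul, mul_comm] using h1
  · have h1 : (∫ z in w'..w, g z) ≤ ∫ z in w'..w, g w :=
      intervalIntegral.integral_mono_on h (hint w' w) (intervalIntegrable_const)
        (fun z hz => hgm hz.2)
    rw [intervalIntegral.integral_symm w' w]
    simp only [intervalIntegral.integral_const, smul_eq_mul] at h1 ⊢
    nlinarith

/-- Supporting line inequality for a function with strictly decreasing derivative. -/
lemma deriv_support {I : Set ℝ} (hI : Convex ℝ I) {U finv : ℝ → ℝ}
    (hU : ∀ y ∈ I, HasDerivAt U (finv y) y) (hanti : StrictAntiOn finv I)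
    {y y' : ℝ} (hy : y ∈ I) (hy' : y' ∈ I) :
    U y' - U y ≤ finv y * (y' - y) := by
  have hseg : ∀ {a b : ℝ}, a ∈ I → b ∈ I → Icc a b ⊆ I := fun ha hb => hI.ordConnected.out ha hb
  rcases lt_trichotomy y y' with h | h | h
  · obtain ⟨c, hc, hceq⟩ := exists_hasDerivAt_eq_slope U finv h
      (fun z hz => (hU z (hseg hy hy' hz)).continuousAt.continuousWithinAt)
      (fun z hz => hU z (hseg hy hy' (Ioo_subset_Icc_self hz)))
    have hcI : c ∈ I := hseg hy hy' (Ioo_subset_Icc_self hc)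
    have h1 : finv c ≤ finv y := le_of_lt (hanti hy hcI hc.1)
    have hne : y' - y ≠ 0 := sub_ne_zero.mpr (ne_of_gt h)
    have h2 : U y' - U y = finv c * (y' - y) := (div_eq_iff hne).mp hceq.symm
    rw [h2]; nlinarith
  · simp [h]
  · obtain ⟨c, hc, hceq⟩ := exists_hasDerivAt_eq_slope U finv h
      (fun z hz => (hU z (hseg hy' hy hz)).continuousAt.continuousWithinAt)
      (fun z hz => hU z (hseg hy' hy (Ioo_subset_Icc_self hz)))
    have hcI : c ∈ I := hseg hy' hy (Ioo_subset_Icc_self hc)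
    have h1 : finv y ≤ finv c := le_of_lt (hanti hcI hy hc.2)
    have hne : y - y' ≠ 0 := sub_ne_zero.mpr (ne_of_gt h)
    have h2 : U y - U y' = finv c * (y - y') := (div_eq_iff hne).mp hceq.symm
    nlinarith

/-- A sum of strictly convex coordinate functions is strictly convex on the product set. -/
lemma strictConvexOn_sum_coord {K : Type} [Fintype K] {I : K → Set ℝ}
    {h : K → ℝ → ℝ} (hh : ∀ k, StrictConvexOn ℝ (I k) (h k)) :
    StrictConvexOn ℝ {x : K → ℝ | ∀ k, x k ∈ I k} (fun x => ∑ k, h k (x k)) := by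
  constructor
  · intro x hx y hy p q hp hq hpq k
    exact (hh k).1 (hx k) (hy k) hp hq hpq
  · intro x hx y hy hxy p q hp hq hpq
    obtain ⟨k0, hk0⟩ := Function.ne_iff.mp hxy
    calc ∑ k, h k ((p • x + q • y) k) = ∑ k, h k (p * x k + q * y k) := by simp
      _ < ∑ k, (p * h k (x k) + q * h k (y k)) := by
          apply Finset.sum_lt_sum
          · intro k _
            by_cases hk : x k = y k
            · rw [hk]
              have h1 : p * y k + q * y k = y k := by rw [← add_mul, hpq, one_mul]
              rw [h1, ← add_mul, hpq, one_mul]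
            · have := (hh k).2 (hx k) (hy k) hk hp hq hpq
              simpa [smul_eq_mul] using this.le
          · exact ⟨k0, Finset.mem_univ k0, by
              simpa [smul_eq_mul] using (hh k0).2 (hx k0) (hy k0) hk0 hp hq hpq⟩
      _ = p • (∑ k, h k (x k)) + q • (∑ k, h k (y k)) := by
          rw [Finset.sum_add_distrib, smul_eq_mul, smul_eq_mul, Finset.mul_sum, Finset.mul_sum]

lemma primitive_hasDerivAt {g : ℝ → ℝ} (hgc : Continuous g) (u : ℝ) :
    HasDerivAt (fun u => ∫ z in (0:ℝ)..u, g z) (g u) u :=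
  intervalIntegral.integral_hasDerivAt_right (hgc.intervalIntegrable 0 u)
    (hgc.stronglyMeasurableAtFilter volume (nhds u)) hgc.continuousAt

lemma primitive_convexOn {g : ℝ → ℝ} (hgc : Continuous g) (hgm : Monotone g) :
    ConvexOn ℝ Set.univ (fun u => ∫ z in (0:ℝ)..u, g z) := by
  apply MonotoneOn.convexOn_of_deriv convex_univ
  · exact fun u _ => (primitive_hasDerivAt hgc u).continuousAt.continuousWithinAt
  · exact fun u _ => (primitive_hasDerivAt hgc u).differentiableAt.differentiableWithinAt
  · intro u _ v _ huv
    rw [(primitive_hasDerivAt hgc u).deriv, (primitive_hasDerivAt hgc v).deriv]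
    exact hgm huv

lemma convexOn_sum_comp {A K : Type} [Fintype A] [Fintype K] {G : A → ℝ → ℝ}
    (hG : ∀ a, ConvexOn ℝ Set.univ (G a)) (F : A → Finset K) {S : Set (K → ℝ)}
    (hS : Convex ℝ S) :
    ConvexOn ℝ S (fun x => ∑ a, G a (∑ s ∈ F a, x s)) := by
  refine ⟨hS, fun x hx y hy p q hp hq hpq => ?_⟩
  have hw : ∀ a : A, (∑ s ∈ F a, (p • x + q • y) s)
      = p * (∑ s ∈ F a, x s) + q * (∑ s ∈ F a, y s) := by
    intro a
    simp [Finset.sum_add_distrib, Finset.mul_sum]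
  calc ∑ a, G a (∑ s ∈ F a, (p • x + q • y) s)
      = ∑ a, G a (p * (∑ s ∈ F a, x s) + q * (∑ s ∈ F a, y s)) :=
        Finset.sum_congr rfl fun a _ => by rw [hw a]
    _ ≤ ∑ a, (p * G a (∑ s ∈ F a, x s) + q * G a (∑ s ∈ F a, y s)) :=
        Finset.sum_le_sum fun a _ => by
          simpa [smul_eq_mul] using (hG a).2 (mem_univ _) (mem_univ _) hp hq hpq
    _ = p • (∑ a, G a (∑ s ∈ F a, x s)) + q • (∑ a, G a (∑ s ∈ F a, y s)) := by
        rw [Finset.sum_add_distrib, smul_eq_mul, smul_eq_mul, Finset.mul_sum, Finset.mul_sum]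

lemma neg_strictConvexOn {I : Set ℝ} (hIc : Convex ℝ I) (hIo : IsOpen I) {U finv : ℝ → ℝ}
    (hU : ∀ y ∈ I, HasDerivAt U (finv y) y) (hanti : StrictAntiOn finv I) :
    StrictConvexOn ℝ I (fun y => -U y) := by
  apply StrictMonoOn.strictConvexOn_of_deriv hIc
  · exact fun y hy => ((hU y hy).continuousAt.continuousWithinAt).neg
  · rw [hIo.interior_eq]
    intro y1 h1 y2 h2 h12
    rw [((hU y1 h1).fun_neg).deriv, ((hU y2 h2).fun_neg).deriv]
    exact neg_lt_neg (hanti h1 h2 h12)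

/-- The total flow on link `a`. -/
noncomputable def wA {A K : Type} [Fintype K] [DecidableEq A] (Ak : K → Finset A)
    (a : A) (x : K → ℝ) : ℝ :=
  ∑ s ∈ Finset.univ.filter (fun s => a ∈ Ak s), x s

/-- A version of the objective whose integrands `ψ a (max z 0)` are globally defined. -/
noncomputable def Jtil {A K : Type} [Fintype A] [Fintype K] [DecidableEq A]
    (Ak : K → Finset A) (ψ : A → ℝ → ℝ) (U : K → ℝ → ℝ) (x : K → ℝ) : ℝ :=
  (∑ a, ∫ z in (0:ℝ)..(wA Ak a x), ψ a (max z 0)) - ∑ k, U k (x k)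

lemma sum_swap_w {A K : Type} [Fintype A] [Fintype K] [DecidableEq A] (Ak : K → Finset A)
    (c : A → ℝ) (d : K → ℝ) :
    ∑ a, c a * (∑ s ∈ Finset.univ.filter (fun s => a ∈ Ak s), d s)
      = ∑ s, (∑ a ∈ Ak s, c a) * d s := by
  simp_rw [Finset.mul_sum, Finset.sum_filter, Finset.sum_mul]
  rw [Finset.sum_comm]
  refine Finset.sum_congr rfl fun s _ => ?_
  rw [Finset.sum_ite_mem, Finset.univ_inter]

lemma Jtil_hasDerivAt {A K : Type} [Fintype A] [Fintype K] [DecidableEq A] [DecidableEq K]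
    (Ak : K → Finset A) (ψ : A → ℝ → ℝ)
    (hgc : ∀ a, Continuous (fun z => ψ a (max z 0)))
    (U : K → ℝ → ℝ) (finv : K → ℝ → ℝ) (x : K → ℝ) (k : K)
    (hUk : HasDerivAt (U k) (finv k (x k)) (x k)) :
    HasDerivAt (fun t => Jtil Ak ψ U (fun j => x j + if j = k then t else 0))
      ((∑ a ∈ Ak k, ψ a (max (wA Ak a x) 0)) - finv k (x k)) 0 := by
  have hwt : ∀ (a : A) (t : ℝ), wA Ak a (fun j => x j + if j = k then t else 0)
      = wA Ak a x + (if a ∈ Ak k then t else 0) := by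
    intro a t
    unfold wA
    rw [Finset.sum_add_distrib]
    congr 1
    rw [Finset.sum_ite_eq' (Finset.univ.filter (fun s => a ∈ Ak s)) k (fun _ => t)]
    simp [Finset.mem_filter]
  have hfun : (fun t => Jtil Ak ψ U (fun j => x j + if j = k then t else 0))
      = fun t => (∑ a, ∫ z in (0:ℝ)..(wA Ak a x + if a ∈ Ak k then t else 0), ψ a (max z 0))
          - (∑ j, U j (x j + if j = k then t else 0)) := by
    funext t
    unfold Jtil
    simp only [hwt]
  rw [hfun]
  have h1 : HasDerivAt
      (fun t => ∑ a, ∫ z in (0:ℝ)..(wA Ak a x + if a ∈ Ak k then t else 0), ψ a (max z 0))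
      (∑ a, if a ∈ Ak k then ψ a (max (wA Ak a x) 0) else 0) 0 := by
    apply HasDerivAt.fun_sum
    intro a _
    by_cases ha : a ∈ Ak k
    · simp only [ha, if_true]
      have hin : HasDerivAt (fun t : ℝ => wA Ak a x + t) 1 0 :=
        (hasDerivAt_id (0:ℝ)).const_add (wA Ak a x)
      have hout : HasDerivAt (fun u => ∫ z in (0:ℝ)..u, ψ a (max z 0))
          (ψ a (max (wA Ak a x + 0) 0)) (wA Ak a x + 0) :=
        primitive_hasDerivAt (hgc a) _
      have := hout.comp 0 hin
      simpa [Function.comp_def] using this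
    · simp only [ha, if_false, add_zero]
      exact hasDerivAt_const 0 _
  have h2 : HasDerivAt (fun t => ∑ j, U j (x j + if j = k then t else 0))
      (finv k (x k)) 0 := by
    have hsum : HasDerivAt (fun t => ∑ j, U j (x j + if j = k then t else 0))
        (∑ j, if j = k then finv k (x k) else 0) 0 := by
      apply HasDerivAt.fun_sum
      intro j _
      by_cases hj : j = k
      · subst hj
        simp only [if_pos rfl]
        have hin : HasDerivAt (fun t : ℝ => x j + t) 1 0 :=
          (hasDerivAt_id (0:ℝ)).const_add (x j)
        have hUk' : HasDerivAt (U j) (finv j (x j)) (x j + 0) := by simpa using hUk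
        have := hUk'.comp 0 hin
        simpa [Function.comp_def] using this
      · simp only [hj, if_false, add_zero]
        exact hasDerivAt_const 0 _
    simpa [Finset.sum_ite_eq'] using hsum
  have h3 := h1.sub h2
  have h4 : (∑ a, if a ∈ Ak k then ψ a (max (wA Ak a x) 0) else 0)
      = ∑ a ∈ Ak k, ψ a (max (wA Ak a x) 0) := by
    rw [Finset.sum_ite_mem, Finset.univ_inter]
  rwa [h4] at h3

lemma Jtil_ge {A K : Type} [Fintype A] [Fintype K] [DecidableEq A]
    (Ak : K → Finset A) (ψ : A → ℝ → ℝ)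
    (hgc : ∀ a, Continuous (fun z => ψ a (max z 0)))
    (hgm : ∀ a, Monotone (fun z => ψ a (max z 0)))
    {I : K → Set ℝ} (hIconv : ∀ k, Convex ℝ (I k))
    (U : K → ℝ → ℝ) (finv : K → ℝ → ℝ)
    (hU : ∀ k, ∀ y ∈ I k, HasDerivAt (U k) (finv k y) y)
    (hanti : ∀ k, StrictAntiOn (finv k) (I k))
    (x y : K → ℝ) (hx : ∀ k, x k ∈ I k) (hy : ∀ k, y k ∈ I k) :
    (∑ s, ((∑ a ∈ Ak s, ψ a (max (wA Ak a x) 0)) - finv s (x s)) * (y s - x s))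
      ≤ Jtil Ak ψ U y - Jtil Ak ψ U x := by
  have hGa := fun a => prim_support (hgc a) (hgm a) (wA Ak a x) (wA Ak a y)
  have hUs := fun s => deriv_support (hIconv s) (hU s) (hanti s) (hx s) (hy s)
  have hsum1 : ∑ a, ψ a (max (wA Ak a x) 0) * (wA Ak a y - wA Ak a x)
      ≤ ∑ a, ((∫ z in (0:ℝ)..(wA Ak a y), ψ a (max z 0))
          - ∫ z in (0:ℝ)..(wA Ak a x), ψ a (max z 0)) :=
    Finset.sum_le_sum fun a _ => hGa a
  have hsum2 : ∑ s, (U s (y s) - U s (x s)) ≤ ∑ s, finv s (x s) * (y s - x s) :=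
    Finset.sum_le_sum fun s _ => hUs s
  have hswap : ∑ a, ψ a (max (wA Ak a x) 0) * (wA Ak a y - wA Ak a x)
      = ∑ s, (∑ a ∈ Ak s, ψ a (max (wA Ak a x) 0)) * (y s - x s) := by
    have hd : ∀ a : A, wA Ak a y - wA Ak a x
        = ∑ s ∈ Finset.univ.filter (fun s => a ∈ Ak s), (y s - x s) := by
      intro a; unfold wA; rw [Finset.sum_sub_distrib]
    simp_rw [hd]
    exact sum_swap_w Ak _ _
  have e1 : ∑ a, ((∫ z in (0:ℝ)..(wA Ak a y), ψ a (max z 0))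
        - ∫ z in (0:ℝ)..(wA Ak a x), ψ a (max z 0))
      = (∑ a, ∫ z in (0:ℝ)..(wA Ak a y), ψ a (max z 0))
        - ∑ a, ∫ z in (0:ℝ)..(wA Ak a x), ψ a (max z 0) := Finset.sum_sub_distrib _ _
  have e2 : ∑ s, (U s (y s) - U s (x s)) = (∑ s, U s (y s)) - ∑ s, U s (x s) :=
    Finset.sum_sub_distrib _ _
  have e3 : ∑ s, ((∑ a ∈ Ak s, ψ a (max (wA Ak a x) 0)) - finv s (x s)) * (y s - x s)
      = (∑ s, (∑ a ∈ Ak s, ψ a (max (wA Ak a x) 0)) * (y s - x s))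
        - ∑ s, finv s (x s) * (y s - x s) := by
    simp_rw [sub_mul]
    exact Finset.sum_sub_distrib _ _
  rw [e1] at hsum1
  rw [e2] at hsum2
  rw [e3, ← hswap]
  unfold Jtil
  linarith

end AuxLemmas

/-- The objective function of the (NUM) problem:
`J(x) = Σ_a Ψ_a(Σ_{s : a ∈ A_s} x^s) − Σ_k U_k(x^k)` where
`Ψ_a(w) = ∫_0^w ψ_a(z) dz`. -/
noncomputable def NUMobj {A K : Type} [Fintype A] [Fintype K] [DecidableEq A]
    (Ak : K → Finset A) (ψ : A → ℝ → ℝ) (U : K → ℝ → ℝ) (x : K → ℝ) : ℝ :=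
  (∑ a, ∫ z in (0:ℝ)..(∑ s ∈ Finset.univ.filter (fun s => a ∈ Ak s), x s), ψ a z)
    - ∑ k, U k (x k)

/-- `x*` (with `x*^k ∈ I_k`) satisfies the equilibrium equations
`f_k⁻¹(x*^k) = Σ_{a∈A_k} ψ_a(Σ_{s : a∈A_s} x*^s)` iff `x*` is a global minimizer
of `J` over the open set `Π_k I_k`; moreover `J` is strictly convex on `Π_k I_k`,
so such a minimizer is unique. Here `I_k = f_k((0,∞))`. -/
theorem stmt19 {A K : Type} [Fintype A] [Fintype K] [DecidableEq A] [Nonempty K]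
    (Ak : K → Finset A)
    (ψ : A → ℝ → ℝ)
    (hψc : ∀ a, ContinuousOn (ψ a) (Set.Ici 0))
    (hψm : ∀ a, StrictMonoOn (ψ a) (Set.Ici 0))
    (hψ0 : ∀ a, ψ a 0 = 0)
    (hψnn : ∀ a, ∀ w : ℝ, 0 ≤ w → 0 ≤ ψ a w)
    (f : K → ℝ → ℝ)
    (hfpos : ∀ k, ∀ q : ℝ, 0 < q → 0 < f k q)
    (hfc : ∀ k, ContinuousOn (f k) (Set.Ioi 0))
    (hfm : ∀ k, StrictAntiOn (f k) (Set.Ioi 0))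
    (hflim : ∀ k, Tendsto (f k) atTop (nhds 0))
    (finv : K → ℝ → ℝ)
    (hfinv : ∀ k, ∀ q : ℝ, 0 < q → finv k (f k q) = q)
    (U : K → ℝ → ℝ)
    (hU : ∀ k, ∀ y ∈ f k '' Set.Ioi (0:ℝ), HasDerivAt (U k) (finv k y) y)
    (xstar : K → ℝ) (hx : ∀ k, xstar k ∈ f k '' Set.Ioi (0:ℝ)) :
    ((∀ k, finv k (xstar k) =
        ∑ a ∈ Ak k, ψ a (∑ s ∈ Finset.univ.filter (fun s => a ∈ Ak s), xstar s)) ↔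
      (∀ y : K → ℝ, (∀ k, y k ∈ f k '' Set.Ioi (0:ℝ)) →
        NUMobj Ak ψ U xstar ≤ NUMobj Ak ψ U y)) ∧
    StrictConvexOn ℝ {x : K → ℝ | ∀ k, x k ∈ f k '' Set.Ioi (0:ℝ)}
      (NUMobj Ak ψ U) ∧
    (∀ x₁ x₂ : K → ℝ, (∀ k, x₁ k ∈ f k '' Set.Ioi (0:ℝ)) →
      (∀ k, x₂ k ∈ f k '' Set.Ioi (0:ℝ)) →
      (∀ y : K → ℝ, (∀ k, y k ∈ f k '' Set.Ioi (0:ℝ)) →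
        NUMobj Ak ψ U x₁ ≤ NUMobj Ak ψ U y) →
      (∀ y : K → ℝ, (∀ k, y k ∈ f k '' Set.Ioi (0:ℝ)) →
        NUMobj Ak ψ U x₂ ≤ NUMobj Ak ψ U y) →
      x₁ = x₂) := by
  classical
  -- basic facts about the intervals I k = f k '' Ioi 0
  have hIpos : ∀ k, f k '' Set.Ioi (0:ℝ) ⊆ Set.Ioi 0 := by
    rintro k y ⟨q, hq, rfl⟩
    exact hfpos k q hq
  have hIconv : ∀ k, Convex ℝ (f k '' Set.Ioi (0:ℝ)) := fun k =>
    ((isPreconnected_Ioi.image _ (hfc k)).ordConnected).convex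
  have hIopen : ∀ k, IsOpen (f k '' Set.Ioi (0:ℝ)) := by
    intro k
    rw [isOpen_iff_mem_nhds]
    rintro y ⟨q, hq, rfl⟩
    rw [Set.mem_Ioi] at hq
    have hq2 : (0:ℝ) < q / 2 := by linarith
    have h1 : q / 2 < q := by linarith
    have h2 : q < q + 1 := by linarith
    have hcont : ContinuousOn (f k) (Set.Icc (q / 2) (q + 1)) :=
      (hfc k).mono (fun z hz => lt_of_lt_of_le hq2 hz.1)
    have hsub : Set.Ioo (f k (q + 1)) (f k (q / 2)) ⊆ f k '' Set.Ioo (q / 2) (q + 1) :=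
      intermediate_value_Ioo' (le_of_lt (lt_trans h1 h2)) hcont
    refine Filter.mem_of_superset (Ioo_mem_nhds ?_ ?_) (hsub.trans ?_)
    · exact hfm k (Set.mem_Ioi.mpr hq) (Set.mem_Ioi.mpr (by linarith)) h2
    · exact hfm k (Set.mem_Ioi.mpr hq2) (Set.mem_Ioi.mpr hq) h1
    · exact Set.image_mono (fun z hz => lt_trans hq2 hz.1)
  have hanti : ∀ k, StrictAntiOn (finv k) (f k '' Set.Ioi (0:ℝ)) := by
    rintro k y1 ⟨q1, hq1, rfl⟩ y2 ⟨q2, hq2, rfl⟩ h12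
    rw [Set.mem_Ioi] at hq1 hq2
    rw [hfinv k q1 hq1, hfinv k q2 hq2]
    by_contra hle
    push_neg at hle
    rcases eq_or_lt_of_le hle with heq | hlt
    · rw [heq] at h12; exact lt_irrefl _ h12
    · exact absurd h12 (not_lt.mpr (le_of_lt (hfm k (Set.mem_Ioi.mpr hq1)
        (Set.mem_Ioi.mpr hq2) hlt)))
  -- facts about g a = fun z => ψ a (max z 0)
  have hgc : ∀ a, Continuous (fun z => ψ a (max z 0)) := fun a =>
    (hψc a).comp_continuous (continuous_id.max continuous_const) (fun z => le_max_right z 0)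
  have hgm : ∀ a, Monotone (fun z => ψ a (max z 0)) := fun a u v huv =>
    (hψm a).monotoneOn (le_max_right u 0) (le_max_right v 0) (max_le_max huv le_rfl)
  have hwnn : ∀ (a : A) (x : K → ℝ), (∀ k, x k ∈ f k '' Set.Ioi (0:ℝ)) → 0 ≤ wA Ak a x := by
    intro a x hxS
    exact Finset.sum_nonneg fun s _ => le_of_lt (hIpos s (hxS s))
  have hmax : ∀ (a : A) (x : K → ℝ), (∀ k, x k ∈ f k '' Set.Ioi (0:ℝ)) →
      max (wA Ak a x) 0 = wA Ak a x := fun a x hxS => max_eq_left (hwnn a x hxS)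
  -- NUMobj agrees with Jtil on the feasible set
  have hNUM_eq : ∀ x : K → ℝ, NUMobj Ak ψ U x
      = (∑ a, ∫ z in (0:ℝ)..(wA Ak a x), ψ a z) - ∑ k, U k (x k) := fun x => rfl
  have hEq : ∀ x : K → ℝ, (∀ k, x k ∈ f k '' Set.Ioi (0:ℝ)) →
      NUMobj Ak ψ U x = Jtil Ak ψ U x := by
    intro x hxS
    rw [hNUM_eq]
    unfold Jtil
    congr 1
    refine Finset.sum_congr rfl fun a _ => ?_
    refine intervalIntegral.integral_congr ?_
    intro z hz
    rw [Set.uIcc_of_le (hwnn a x hxS)] at hz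
    simp only
    rw [max_eq_left hz.1]
  -- convexity of the feasible set
  have hSconv : Convex ℝ {x : K → ℝ | ∀ k, x k ∈ f k '' Set.Ioi (0:ℝ)} := by
    intro x hxS y hyS p q hp hq hpq k
    exact hIconv k (hxS k) (hyS k) hp hq hpq
  -- strict convexity of Jtil
  have hJt : StrictConvexOn ℝ {x : K → ℝ | ∀ k, x k ∈ f k '' Set.Ioi (0:ℝ)}
      (Jtil Ak ψ U) := by
    have hΦ : ConvexOn ℝ {x : K → ℝ | ∀ k, x k ∈ f k '' Set.Ioi (0:ℝ)}
        (fun x => ∑ a, (fun u => ∫ z in (0:ℝ)..u, ψ a (max z 0))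
          (∑ s ∈ Finset.univ.filter (fun s => a ∈ Ak s), x s)) :=
      convexOn_sum_comp (fun a => primitive_convexOn (hgc a) (hgm a))
        (fun a => Finset.univ.filter (fun s => a ∈ Ak s)) hSconv
    have hN : StrictConvexOn ℝ {x : K → ℝ | ∀ k, x k ∈ f k '' Set.Ioi (0:ℝ)}
        (fun x => ∑ k, (fun y => -U k y) (x k)) :=
      strictConvexOn_sum_coord (fun k =>
        neg_strictConvexOn (hIconv k) (hIopen k) (hU k) (hanti k))
    have hadd := hΦ.add_strictConvexOn hN
    have hfun : Jtil Ak ψ U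
        = (fun x => ∑ a, (fun u => ∫ z in (0:ℝ)..u, ψ a (max z 0))
            (∑ s ∈ Finset.univ.filter (fun s => a ∈ Ak s), x s))
          + (fun x => ∑ k, (fun y => -U k y) (x k)) := by
      funext x
      show Jtil Ak ψ U x = _ + _
      unfold Jtil wA
      simp [sub_eq_add_neg]
    rw [hfun]
    exact hadd
  -- strict convexity of NUMobj
  have hNUM : StrictConvexOn ℝ {x : K → ℝ | ∀ k, x k ∈ f k '' Set.Ioi (0:ℝ)}
      (NUMobj Ak ψ U) := by
    constructor
    · exact hSconv
    · intro x hxS y hyS hne p q hp hq hpq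
      have hc : (p • x + q • y) ∈ {x : K → ℝ | ∀ k, x k ∈ f k '' Set.Ioi (0:ℝ)} :=
        hSconv hxS hyS hp.le hq.le hpq
      rw [hEq _ hxS, hEq _ hyS, hEq _ hc]
      exact hJt.2 hxS hyS hne hp hq hpq
  refine ⟨⟨?_, ?_⟩, hNUM, ?_⟩
  · -- equilibrium implies minimizer
    intro heq y hyS
    rw [hEq xstar hx, hEq y hyS]
    have key := Jtil_ge Ak ψ hgc hgm hIconv U finv hU hanti xstar y hx hyS
    have hz : ∑ s, ((∑ a ∈ Ak s, ψ a (max (wA Ak a xstar) 0)) - finv s (xstar s))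
        * (y s - xstar s) = 0 := by
      apply Finset.sum_eq_zero
      intro s _
      have hsum : (∑ a ∈ Ak s, ψ a (max (wA Ak a xstar) 0)) = finv s (xstar s) := by
        rw [heq s]
        exact Finset.sum_congr rfl fun a _ => by rw [hmax a xstar hx]; rfl
      rw [hsum, sub_self, zero_mul]
    rw [hz] at key
    linarith
  · -- minimizer implies equilibrium
    intro hmin k
    have hUk := hU k (xstar k) (hx k)
    have hder := Jtil_hasDerivAt Ak ψ hgc U finv xstar k hUk
    have hloc : IsLocalMin (fun t => Jtil Ak ψ U (fun j => xstar j + if j = k then t else 0))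
        0 := by
      have hcontt : ContinuousAt (fun t : ℝ => xstar k + t) 0 :=
        (continuous_const.add continuous_id).continuousAt
      have hnb : ∀ᶠ t in nhds (0:ℝ), xstar k + t ∈ f k '' Set.Ioi (0:ℝ) := by
        have := hcontt.preimage_mem_nhds ((hIopen k).mem_nhds (by simpa using hx k))
        exact this
      filter_upwards [hnb] with t ht
      have hyt : ∀ j, (fun j => xstar j + if j = k then t else 0) j
          ∈ f j '' Set.Ioi (0:ℝ) := by
        intro j
        by_cases hj : j = k
        · subst hj; simpa using ht
        · simpa [hj] using hx j
      have h0 : (fun j => xstar j + if j = k then (0:ℝ) else 0) = xstar := by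
        funext j; simp
      show Jtil Ak ψ U (fun j => xstar j + if j = k then (0:ℝ) else 0)
        ≤ Jtil Ak ψ U (fun j => xstar j + if j = k then t else 0)
      rw [h0, ← hEq xstar hx, ← hEq _ hyt]
      exact hmin _ hyt
    have hzero := hloc.hasDerivAt_eq_zero hder
    have h2 : (∑ a ∈ Ak k, ψ a (max (wA Ak a xstar) 0))
        = ∑ a ∈ Ak k, ψ a (wA Ak a xstar) :=
      Finset.sum_congr rfl fun a _ => by rw [hmax a xstar hx]
    rw [h2] at hzero
    have : finv k (xstar k) = ∑ a ∈ Ak k, ψ a (wA Ak a xstar) := by linarith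
    exact this
  · -- uniqueness
    intro x1 x2 h1 h2 hm1 hm2
    exact hNUM.eq_of_isMinOn (isMinOn_iff.mpr fun y hyS => hm1 y hyS)
      (isMinOn_iff.mpr fun y hyS => hm2 y hyS) h1 h2
end
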